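/- arXiv:1509.03869 — 4 statements merged into one kernel-verified Lean document; each statement's English description precedes it below -/
import Mathlib

section
/- Let C be a filtered coalgebra over a field k, i.e. C = ⋃_{n≥0} C_n for an ascending chain of subspaces C_n with Δ(C_n) ⊆ ∑_{m≥0} C_m ⊗ C_{n-m}. Then every grouplike element g of C (that is, g ≠ 0 with Δ(g) = g ⊗ g) lies in C_0. -/
open TensorProduct

/-- In a filtered coalgebra `C = ⋃ₙ Cₙ` (with
`Δ(Cₙ) ⊆ ∑ₘ Cₘ ⊗ C_{n-m}`), every grouplike element lies in `C₀`. -/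
theorem grouplike_mem_filtration_zero
    (k : Type) [Field k] (C : Type) [AddCommGroup C] [Module k C] [Coalgebra k C]
    (F : ℕ → Submodule k C) (hmono : Monotone F) (hexh : (⨆ n, F n) = ⊤)
    (hfilt : ∀ n, ∀ x ∈ F n,
      Coalgebra.comul (R := k) x ∈
        ⨆ m : Fin (n + 1), Submodule.map₂ (TensorProduct.mk k C C) (F m) (F (n - m)))
    (g : C) (hg0 : g ≠ 0)
    (hg : Coalgebra.comul (R := k) g = g ⊗ₜ[k] g) :
    g ∈ F 0 := by
  classical
  have hex : ∃ n, g ∈ F n := by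
    have : g ∈ (⨆ n, F n) := hexh ▸ Submodule.mem_top
    exact (Submodule.mem_iSup_of_directed _ (hmono.directed_le)).mp this
  set n := Nat.find hex with hn
  have hgn : g ∈ F n := Nat.find_spec hex
  rcases Nat.eq_zero_or_pos n with h0 | hpos
  · exact h0 ▸ hgn
  · -- g ∉ F (n-1)
    have hnot : g ∉ F (n - 1) := fun h => Nat.find_min hex (Nat.sub_lt hpos one_pos) h
    obtain ⟨f, hf1, hf2⟩ := (F (n - 1)).exists_dual_map_eq_bot_of_notMem hnot inferInstance
    have hfz : ∀ x ∈ F (n - 1), f x = 0 := by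
      intro x hx
      have : f x ∈ Submodule.map f (F (n - 1)) := Submodule.mem_map_of_mem hx
      rw [hf2] at this
      exact (Submodule.mem_bot k).mp this
    -- ψ = (lid) ∘ (f ⊗ id)
    set ψ : C ⊗[k] C →ₗ[k] C :=
      (TensorProduct.lid k C).toLinearMap ∘ₗ (LinearMap.rTensor C f) with hψ
    have hψapp : ∀ x y : C, ψ (x ⊗ₜ[k] y) = f x • y := by
      intro x y; simp [hψ]
    -- ψ (Δ g) ∈ F 0
    have key : ψ (Coalgebra.comul (R := k) g) ∈ F 0 := by
      have hmem := hfilt n g hgn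
      have hle : (⨆ m : Fin (n + 1),
          Submodule.map₂ (TensorProduct.mk k C C) (F m) (F (n - m))) ≤
          Submodule.comap ψ (F 0) := by
        apply iSup_le
        intro m
        apply Submodule.map₂_le.mpr
        intro x hx y hy
        simp only [Submodule.mem_comap, TensorProduct.mk_apply]
        rw [hψapp]
        rcases lt_or_eq_of_le (Nat.lt_succ_iff.mp m.isLt) with hm | hm
        · have : f x = 0 := hfz x (hmono (Nat.le_sub_one_of_lt hm) hx)
          rw [this, zero_smul]; exact (F 0).zero_mem
        · have : (n : ℕ) - (m : ℕ) = 0 := by omega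
          rw [this] at hy
          exact (F 0).smul_mem _ hy
      exact hle hmem
    rw [hg, hψapp] at key
    have : g = (f g)⁻¹ • (f g • g) := by
      rw [smul_smul, inv_mul_cancel₀ hf1, one_smul]
    rw [this]
    exact (F 0).smul_mem _ key
end

section
/- Let C be a filtered coalgebra C = ⋃_{n≥0} C_n over a field k, and let V be a nonzero finite-dimensional C-comodule. Then there exists a nonzero subspace V_0 of V such that the coaction restricts to a map V_0 → C_0 ⊗ V_0, i.e. V_0 is a C_0-comodule. -/
set_option linter.unusedSectionVars false

open TensorProduct

namespace C0Sub

variable {k : Type} [Field k] {C : Type} [AddCommGroup C] [Module k C]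
variable {V : Type} [AddCommGroup V] [Module k V]

/-- Apply a functional to the left tensor factor. -/
noncomputable def actL (φ : Module.Dual k C) : C ⊗[k] V →ₗ[k] V :=
  (TensorProduct.lid k V).toLinearMap ∘ₗ TensorProduct.map φ LinearMap.id

@[simp] lemma actL_tmul (φ : Module.Dual k C) (c : C) (v : V) :
    actL φ (c ⊗ₜ[k] v) = φ c • v := by
  simp [actL]

/-- Apply a functional to the right tensor factor. -/
noncomputable def rho (h : Module.Dual k V) : C ⊗[k] V →ₗ[k] C :=
  (TensorProduct.rid k C).toLinearMap ∘ₗ TensorProduct.map LinearMap.id h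

@[simp] lemma rho_tmul (h : Module.Dual k V) (c : C) (v : V) :
    rho h (c ⊗ₜ[k] v) = h v • c := by
  simp [rho]

lemma rho_map_right (h : Module.Dual k V) (f : V →ₗ[k] V) (x : C ⊗[k] V) :
    rho h (TensorProduct.map LinearMap.id f x) = rho (h ∘ₗ f) x := by
  induction x using TensorProduct.induction_on with
  | zero => simp
  | tmul c v => simp
  | add a b ha hb => simp [map_add, ha, hb]

lemma actL_map_right (φ : Module.Dual k C) (f : V →ₗ[k] V) (x : C ⊗[k] V) :
    actL φ (TensorProduct.map LinearMap.id f x) = f (actL φ x) := by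
  induction x using TensorProduct.induction_on with
  | zero => simp
  | tmul c v => simp
  | add a b ha hb => simp [map_add, ha, hb]

/-- `rho h x` as a linear function of `h`. -/
noncomputable def Phi (x : C ⊗[k] V) : Module.Dual k V →ₗ[k] C where
  toFun h := rho h x
  map_add' h1 h2 := by simp [rho, TensorProduct.map_add_right]
  map_smul' r h := by simp [rho, TensorProduct.map_smul_right]

@[simp] lemma Phi_apply (x : C ⊗[k] V) (h : Module.Dual k V) : Phi x h = rho h x := rfl

section Basis

variable {ι : Type} [Fintype ι] (b : Module.Basis ι k V)

lemma sum_rho_coord (x : C ⊗[k] V) :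
    ∑ i, (rho (b.coord i) x) ⊗ₜ[k] (b i) = x := by
  have key : (∑ i, ((TensorProduct.mk k C V).flip (b i)) ∘ₗ rho (b.coord i) :
      C ⊗[k] V →ₗ[k] C ⊗[k] V) = LinearMap.id := by
    apply TensorProduct.ext'
    intro c v
    simp only [LinearMap.sum_apply, LinearMap.coe_comp, Function.comp_apply, rho_tmul,
      LinearMap.flip_apply, TensorProduct.mk_apply, LinearMap.id_apply]
    calc ∑ i, ((b.coord i) v • c) ⊗ₜ[k] b i
        = ∑ i, c ⊗ₜ[k] ((b.repr v) i • b i) := by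
          refine Finset.sum_congr rfl fun i _ => ?_
          rw [TensorProduct.smul_tmul, Module.Basis.coord_apply]
      _ = c ⊗ₜ[k] (∑ i, (b.repr v) i • b i) := by rw [← TensorProduct.tmul_sum]
      _ = c ⊗ₜ[k] v := by rw [Module.Basis.sum_repr]
  have h2 := congrArg (fun L => L x) key
  simpa using h2

lemma eq_zero_of_forall_rho_coord {x : C ⊗[k] V}
    (h : ∀ i, rho (b.coord i) x = 0) : x = 0 := by
  rw [← sum_rho_coord b x]
  simp [h]

lemma actL_eq_sum (φ : Module.Dual k C) (x : C ⊗[k] V) :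
    actL φ x = ∑ i, φ (rho (b.coord i) x) • b i := by
  conv_lhs => rw [← sum_rho_coord b x]
  rw [map_sum]
  simp

lemma rho_coord_actL_zero {φ : Module.Dual k C} {x : C ⊗[k] V}
    (h : actL φ x = 0) (i : ι) : φ (rho (b.coord i) x) = 0 := by
  rw [actL_eq_sum b] at h
  exact Fintype.linearIndependent_iff.mp b.linearIndependent
    (fun j => φ (rho (b.coord j) x)) h i

include b in
lemma eq_zero_of_forall_actL {x : C ⊗[k] V}
    (h : ∀ φ : Module.Dual k C, actL φ x = 0) : x = 0 := by
  apply eq_zero_of_forall_rho_coord b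
  intro i
  rw [← Module.forall_dual_apply_eq_zero_iff k]
  intro φ
  exact rho_coord_actL_zero b (h φ) i

end Basis

lemma mem_of_forall_dual {S : Submodule k C} {c : C}
    (h : ∀ φ : Module.Dual k C, (∀ y ∈ S, φ y = 0) → φ c = 0) : c ∈ S := by
  rw [← Submodule.Quotient.mk_eq_zero S, ← Module.forall_dual_apply_eq_zero_iff k]
  intro g
  have := h (g ∘ₗ S.mkQ) (by
    intro y hy
    simp [Submodule.Quotient.mk_eq_zero S |>.mpr hy, Submodule.mkQ_apply])
  simpa using this

lemma rho_mem_of_mem_map₂ {S : Submodule k C} {x : C ⊗[k] V}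
    (hx : x ∈ Submodule.map₂ (TensorProduct.mk k C V) S ⊤) (h : Module.Dual k V) :
    rho h x ∈ S := by
  revert x
  have key : Submodule.map₂ (TensorProduct.mk k C V) S ⊤ ≤ Submodule.comap (rho h) S := by
    rw [Submodule.map₂_le]
    intro m hm n _
    simpa using S.smul_mem (h n) hm
  exact fun x hx => key hx

lemma actL_eq_zero_of_mem_map₂ {S : Submodule k C} {x : C ⊗[k] V}
    (hx : x ∈ Submodule.map₂ (TensorProduct.mk k C V) S ⊤) {φ : Module.Dual k C}
    (hφ : ∀ y ∈ S, φ y = 0) : actL φ x = 0 := by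
  revert x
  have key : Submodule.map₂ (TensorProduct.mk k C V) S ⊤ ≤ LinearMap.ker (actL φ) := by
    rw [Submodule.map₂_le]
    intro m hm n _
    simp [hφ m hm]
  exact fun x hx => key hx

section Coalg

variable [Coalgebra k C]

noncomputable def actL2 (ψ : Module.Dual k C) : C ⊗[k] (C ⊗[k] V) →ₗ[k] C ⊗[k] V :=
  (TensorProduct.lid k (C ⊗[k] V)).toLinearMap ∘ₗ TensorProduct.map ψ LinearMap.id

@[simp] lemma actL2_tmul (ψ : Module.Dual k C) (c : C) (y : C ⊗[k] V) :
    actL2 ψ (c ⊗ₜ[k] y) = ψ c • y := by simp [actL2]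

/-- convolution of two functionals -/
noncomputable def conv (ψ φ : Module.Dual k C) : Module.Dual k C :=
  (TensorProduct.lid k k).toLinearMap ∘ₗ TensorProduct.map ψ φ ∘ₗ Coalgebra.comul

lemma conv_apply (ψ φ : Module.Dual k C) (c : C) :
    conv ψ φ c = TensorProduct.lid k k (TensorProduct.map ψ φ (Coalgebra.comul c)) := rfl

variable (δ : V →ₗ[k] C ⊗[k] V)

/-- action of the dual algebra on the comodule -/
noncomputable def lam (φ : Module.Dual k C) : V →ₗ[k] V := actL φ ∘ₗ δ

lemma lam_apply (φ : Module.Dual k C) (v : V) : lam δ φ v = actL φ (δ v) := rfl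

lemma delta_actL (ψ : Module.Dual k C) (x : C ⊗[k] V) :
    δ (actL ψ x) = actL2 ψ (TensorProduct.map LinearMap.id δ x) := by
  induction x using TensorProduct.induction_on with
  | zero => simp
  | tmul c v => simp
  | add a b ha hb => simp [map_add, ha, hb]

lemma actL_actL2_assoc (φ ψ : Module.Dual k C) (z : C ⊗[k] C) (v : V) :
    actL φ (actL2 ψ (TensorProduct.assoc k C C V (z ⊗ₜ[k] v)))
      = (TensorProduct.lid k k (TensorProduct.map ψ φ z)) • v := by
  induction z using TensorProduct.induction_on with
  | zero => simp
  | tmul a c => simp [smul_smul, mul_comm]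
  | add a b ha hb => simp [add_tmul, map_add, ha, hb, add_smul]

lemma lam_lam (hcoassoc : ∀ v, (TensorProduct.assoc k C C V)
        (TensorProduct.map (Coalgebra.comul (R := k)) LinearMap.id (δ v))
      = TensorProduct.map LinearMap.id δ (δ v))
    (φ ψ : Module.Dual k C) (v : V) :
    lam δ φ (lam δ ψ v) = lam δ (conv ψ φ) v := by
  rw [lam_apply, lam_apply, lam_apply, delta_actL δ ψ (δ v), ← hcoassoc v]
  induction δ v using TensorProduct.induction_on with
  | zero => simp
  | tmul c w => simp [actL_actL2_assoc, conv_apply]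
  | add a b ha hb => simp [map_add, ha, hb]

variable {F : ℕ → Submodule k C}

lemma conv_vanish_right
    (hfilt : ∀ n, ∀ x ∈ F n,
      Coalgebra.comul (R := k) x ∈
        ⨆ m : Fin (n + 1), Submodule.map₂ (TensorProduct.mk k C C) (F m) (F (n - m)))
    (ψ φ : Module.Dual k C) (hφ : ∀ y ∈ F 0, φ y = 0) :
    ∀ c ∈ F 0, conv ψ φ c = 0 := by
  intro c hc
  have h1 := hfilt 0 c hc
  have h2 : (⨆ m : Fin 1, Submodule.map₂ (TensorProduct.mk k C C) (F m) (F (0 - m)))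
      = Submodule.map₂ (TensorProduct.mk k C C) (F 0) (F 0) := by
    rw [iSup_unique]
    norm_num
  rw [h2] at h1
  have h3 : Submodule.map₂ (TensorProduct.mk k C C) (F 0) (F 0) ≤
      LinearMap.ker ((TensorProduct.lid k k).toLinearMap ∘ₗ TensorProduct.map ψ φ) := by
    rw [Submodule.map₂_le]
    intro s hs t ht
    simp [hφ t ht]
  have := h3 h1
  simpa [conv_apply] using this

lemma conv_vanish_left (hmono : Monotone F)
    (hfilt : ∀ n, ∀ x ∈ F n,
      Coalgebra.comul (R := k) x ∈
        ⨆ m : Fin (n + 1), Submodule.map₂ (TensorProduct.mk k C C) (F m) (F (n - m)))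
    (n : ℕ) (φ χ : Module.Dual k C) (hφ : ∀ y ∈ F 0, φ y = 0)
    (hχ : ∀ y ∈ F n, χ y = 0) :
    ∀ c ∈ F (n + 1), conv φ χ c = 0 := by
  intro c hc
  have h1 := hfilt (n + 1) c hc
  have h3 : (⨆ m : Fin (n + 2), Submodule.map₂ (TensorProduct.mk k C C) (F m) (F (n + 1 - m))) ≤
      LinearMap.ker ((TensorProduct.lid k k).toLinearMap ∘ₗ TensorProduct.map φ χ) := by
    apply iSup_le
    intro m
    rw [Submodule.map₂_le]
    intro s hs t ht
    rcases Nat.eq_zero_or_pos (m : ℕ) with hm | hm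
    · rw [hm] at hs
      simp [hφ s hs]
    · have hle : (n + 1 - (m : ℕ)) ≤ n := by omega
      have ht' : t ∈ F n := hmono hle ht
      simp [hχ t ht']
  have := h3 h1
  simpa [conv_apply] using this

/-- The filtration on the comodule. -/
noncomputable def Vn (F : ℕ → Submodule k C) (n : ℕ) : Submodule k V :=
  Submodule.comap δ (Submodule.map₂ (TensorProduct.mk k C V) (F n) ⊤)

lemma Vn_mono (hmono : Monotone F) {m n : ℕ} (h : m ≤ n) : Vn δ F m ≤ Vn δ F n :=
  Submodule.comap_mono (Submodule.map₂_le_map₂ (hmono h) le_rfl)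

variable {ι : Type} [Fintype ι] (b : Module.Basis ι k V)

include b in
lemma mem_Vn_iff (n : ℕ) (v : V) :
    v ∈ Vn δ F n ↔ ∀ φ : Module.Dual k C, (∀ y ∈ F n, φ y = 0) → lam δ φ v = 0 := by
  constructor
  · intro hv φ hφ
    exact actL_eq_zero_of_mem_map₂ hv hφ
  · intro h
    have hcoef : ∀ i, rho (b.coord i) (δ v) ∈ F n := by
      intro i
      apply mem_of_forall_dual
      intro φ hφ
      exact rho_coord_actL_zero b (h φ hφ) i
    show δ v ∈ Submodule.map₂ (TensorProduct.mk k C V) (F n) ⊤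
    rw [← sum_rho_coord b (δ v)]
    exact Submodule.sum_mem _ fun i _ =>
      Submodule.apply_mem_map₂ _ (hcoef i) Submodule.mem_top

lemma exists_Vn_top [FiniteDimensional k V] (hmono : Monotone F)
    (hexh : (⨆ n, F n) = ⊤) : ∃ N, Vn δ F N = ⊤ := by
  have htop : (⨆ n, Submodule.map₂ (TensorProduct.mk k C V) (F n) ⊤) = ⊤ := by
    rw [← Submodule.map₂_iSup_left, hexh, TensorProduct.map₂_mk_top_top_eq_top]
  have hdir : Directed (· ≤ ·) (fun n => Submodule.map₂ (TensorProduct.mk k C V) (F n) ⊤) := by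
    apply Monotone.directed_le
    intro a b' hab
    exact Submodule.map₂_le_map₂ (hmono hab) le_rfl
  have key : ∀ v : V, ∃ n, v ∈ Vn δ F n := by
    intro v
    have hv : δ v ∈ (⨆ n, Submodule.map₂ (TensorProduct.mk k C V) (F n) ⊤) := by
      rw [htop]; trivial
    rcases (Submodule.mem_iSup_of_directed _ hdir).mp hv with ⟨n, hn⟩
    exact ⟨n, hn⟩
  set bV := Module.finBasis k V with hbV
  choose g hg using key
  refine ⟨Finset.univ.sup (fun i => g (bV i)), ?_⟩
  rw [eq_top_iff, ← bV.span_eq, Submodule.span_le]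
  rintro _ ⟨i, rfl⟩
  exact Vn_mono δ hmono (Finset.le_sup (Finset.mem_univ i)) (hg (bV i))

end Coalg

end C0Sub
open C0Sub

/-- Let `C = ⋃ₙ Cₙ` be a filtered coalgebra over `k` and `V` a
nonzero finite-dimensional `C`-comodule with structure map `δ : V → C ⊗ V`.
Then there is a nonzero subspace `V₀ ⊆ V` with `δ(V₀) ⊆ C₀ ⊗ V₀`, i.e. `V₀` is a
`C₀`-comodule. -/
theorem exists_C0_subcomodule
    (k : Type) [Field k] (C : Type) [AddCommGroup C] [Module k C] [Coalgebra k C]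
    (F : ℕ → Submodule k C) (hmono : Monotone F) (hexh : (⨆ n, F n) = ⊤)
    (hfilt : ∀ n, ∀ x ∈ F n,
      Coalgebra.comul (R := k) x ∈
        ⨆ m : Fin (n + 1), Submodule.map₂ (TensorProduct.mk k C C) (F m) (F (n - m)))
    (V : Type) [AddCommGroup V] [Module k V] [FiniteDimensional k V] [Nontrivial V]
    (δ : V →ₗ[k] C ⊗[k] V)
    (hcoassoc : ∀ v, (TensorProduct.assoc k C C V)
        (TensorProduct.map (Coalgebra.comul (R := k)) LinearMap.id (δ v))
      = TensorProduct.map LinearMap.id δ (δ v))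
    (hcounit : ∀ v, (TensorProduct.lid k V)
        (TensorProduct.map (Coalgebra.counit (R := k)) LinearMap.id (δ v)) = v) :
    ∃ V₀ : Submodule k V, V₀ ≠ ⊥ ∧
      ∀ v ∈ V₀, δ v ∈ Submodule.map₂ (TensorProduct.mk k C V) (F 0) V₀ := by
  classical
  set b := Module.finBasis k V with hb
  set V₀ := C0Sub.Vn δ F 0 with hV₀
  have hmemV0 : ∀ v : V, v ∈ V₀ ↔
      ∀ φ : Module.Dual k C, (∀ y ∈ F 0, φ y = 0) → C0Sub.lam δ φ v = 0 :=
    fun v => C0Sub.mem_Vn_iff δ b 0 v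
  -- Part I : V₀ ≠ ⊥
  have hVn_ne : ∃ n, C0Sub.Vn δ F n ≠ ⊥ := by
    obtain ⟨N, hN⟩ := C0Sub.exists_Vn_top δ hmono hexh
    refine ⟨N, by rw [hN]; exact top_ne_bot⟩
  have hn0 := Nat.find_spec hVn_ne
  set n0 := Nat.find hVn_ne with hn0def
  have hV0ne : V₀ ≠ ⊥ := by
    by_contra h0
    have hn0pos : n0 ≠ 0 := by
      intro hzero
      rw [hzero] at hn0
      exact hn0 h0
    obtain ⟨m, hm⟩ := Nat.exists_eq_succ_of_ne_zero hn0pos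
    have hm_bot : C0Sub.Vn δ F m = ⊥ := by
      by_contra hmb
      exact Nat.find_min hVn_ne (by omega) hmb
    obtain ⟨v, hvmem, hvne⟩ := Submodule.ne_bot_iff _ |>.mp hn0
    by_cases hall : ∀ φ : Module.Dual k C, (∀ y ∈ F 0, φ y = 0) → C0Sub.lam δ φ v = 0
    · have : v ∈ V₀ := (hmemV0 v).mpr hall
      rw [h0, Submodule.mem_bot] at this
      exact hvne this
    · push_neg at hall
      obtain ⟨φ, hφ, hne⟩ := hall
      have hmem : C0Sub.lam δ φ v ∈ C0Sub.Vn δ F m := by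
        rw [C0Sub.mem_Vn_iff δ b m]
        intro χ hχ
        rw [C0Sub.lam_lam δ hcoassoc]
        have hvn0 := (C0Sub.mem_Vn_iff δ b n0 v).mp hvmem
        exact hvn0 (C0Sub.conv φ χ) (by
          rw [hm]
          exact C0Sub.conv_vanish_left hmono hfilt m φ χ hφ hχ)
      rw [hm_bot, Submodule.mem_bot] at hmem
      exact hne hmem
  -- Part II : closure
  have step2 : ∀ v ∈ V₀, ∀ φ : Module.Dual k C, (∀ y ∈ F 0, φ y = 0) →
      TensorProduct.map LinearMap.id (C0Sub.lam δ φ) (δ v) = 0 := by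
    intro v hv φ hφ
    apply C0Sub.eq_zero_of_forall_actL b
    intro ψ
    rw [C0Sub.actL_map_right]
    have h1 : C0Sub.actL ψ (δ v) = C0Sub.lam δ ψ v := rfl
    rw [h1, C0Sub.lam_lam δ hcoassoc φ ψ v]
    exact (hmemV0 v).mp hv (C0Sub.conv ψ φ) (C0Sub.conv_vanish_right hfilt ψ φ hφ)
  -- Artinian: finite sub-intersection realizing V₀
  have hV0_inf : V₀ = ⨅ φ : {φ : Module.Dual k C // ∀ y ∈ F 0, φ y = 0},
      LinearMap.ker (C0Sub.lam δ φ.1) := by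
    ext v
    rw [hmemV0 v, Submodule.mem_iInf]
    constructor
    · intro h φ
      exact LinearMap.mem_ker.mpr (h φ.1 φ.2)
    · intro h φ hφ
      exact LinearMap.mem_ker.mp (h ⟨φ, hφ⟩)
  obtain ⟨M, hMmem, hmin⟩ := IsArtinian.set_has_minimal
      {N : Submodule k V | ∃ s : Finset {φ : Module.Dual k C // ∀ y ∈ F 0, φ y = 0},
        N = s.inf (fun φ => LinearMap.ker (C0Sub.lam δ φ.1))}
      ⟨⊤, ∅, by simp⟩
  obtain ⟨s, hs⟩ := hMmem
  have hM_le : ∀ φ : {φ : Module.Dual k C // ∀ y ∈ F 0, φ y = 0},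
      M ≤ LinearMap.ker (C0Sub.lam δ φ.1) := by
    intro φ
    by_contra hnot
    have hlt : M ⊓ LinearMap.ker (C0Sub.lam δ φ.1) < M :=
      lt_of_le_of_ne inf_le_left (fun he => hnot (he ▸ inf_le_right))
    refine hmin _ ⟨insert φ s, ?_⟩ hlt
    rw [Finset.inf_insert, ← hs, inf_comm]
  have hMV0 : M = V₀ := by
    refine le_antisymm ?_ ?_
    · rw [hV0_inf]
      exact le_iInf hM_le
    · rw [hs]
      apply Finset.le_inf
      intro φ _
      rw [hV0_inf]
      exact iInf_le _ φ
  have step3 : ∀ v ∈ V₀, ∀ h : Module.Dual k V, (∀ w ∈ V₀, h w = 0) →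
      C0Sub.rho h (δ v) = 0 := by
    intro v hv h hh
    have hhann : h ∈ V₀.dualAnnihilator := (Submodule.mem_dualAnnihilator h).mpr hh
    have hann_eq : V₀.dualAnnihilator
        = ⨆ φ : ↥s, LinearMap.range ((C0Sub.lam δ (φ.1.1)).dualMap) := by
      rw [← hMV0, hs, Finset.inf_eq_iInf, iInf_subtype', Subspace.dualAnnihilator_iInf_eq]
      refine iSup_congr fun φ => ?_
      rw [LinearMap.range_dualMap_eq_dualAnnihilator_ker]
    rw [hann_eq] at hhann
    have hle : (⨆ φ : ↥s, LinearMap.range ((C0Sub.lam δ (φ.1.1)).dualMap))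
        ≤ LinearMap.ker (C0Sub.Phi (δ v)) := by
      apply iSup_le
      intro φ h' hh'
      obtain ⟨g, rfl⟩ := hh'
      have heq : (C0Sub.lam δ (φ.1.1)).dualMap g = g ∘ₗ C0Sub.lam δ (φ.1.1) := rfl
      rw [LinearMap.mem_ker, C0Sub.Phi_apply, heq, ← C0Sub.rho_map_right,
        step2 v hv φ.1.1 φ.1.2, map_zero]
    exact hle hhann
  -- Conclusion
  refine ⟨V₀, hV0ne, ?_⟩
  intro v hv
  obtain ⟨q, hq⟩ := Submodule.exists_isCompl V₀
  set p1 : V →ₗ[k] V := V₀.subtype ∘ₗ V₀.projectionOnto q hq with hp1def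
  set p2 : V →ₗ[k] V := q.subtype ∘ₗ q.projectionOnto V₀ hq.symm with hp2def
  have hadd : p1 + p2 = LinearMap.id := by
    ext w
    exact Submodule.projection_add_projection_eq_self hq w
  have hp2zero : TensorProduct.map LinearMap.id p2 (δ v) = 0 := by
    apply C0Sub.eq_zero_of_forall_rho_coord b
    intro i
    rw [C0Sub.rho_map_right]
    apply step3 v hv
    intro w hw
    simp [hp2def, Submodule.projectionOnto_apply_of_mem_right hq.symm (x := w) hw]
  have hp1fix : TensorProduct.map LinearMap.id p1 (δ v) = δ v := by
    have h2 : TensorProduct.map (LinearMap.id : C →ₗ[k] C) p1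
          + TensorProduct.map (LinearMap.id : C →ₗ[k] C) p2
        = LinearMap.id := by
      rw [← TensorProduct.map_add_right, hadd]
      exact TensorProduct.map_id
    have h3 := congrArg (fun L : C ⊗[k] V →ₗ[k] C ⊗[k] V => L (δ v)) h2
    simpa [hp2zero] using h3
  rw [← hp1fix]
  have hmem : δ v ∈ Submodule.map₂ (TensorProduct.mk k C V) (F 0) ⊤ := hv
  have hle2 : Submodule.map₂ (TensorProduct.mk k C V) (F 0) ⊤ ≤
      Submodule.comap (TensorProduct.map LinearMap.id p1)
        (Submodule.map₂ (TensorProduct.mk k C V) (F 0) V₀) := by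
    rw [Submodule.map₂_le]
    intro m hm n _
    have : TensorProduct.map LinearMap.id p1 (m ⊗ₜ[k] n) = m ⊗ₜ[k] (p1 n) := by
      simp
    rw [Submodule.mem_comap, TensorProduct.mk_apply, this]
    exact Submodule.apply_mem_map₂ _ hm (by
      simp only [hp1def, LinearMap.coe_comp, Function.comp_apply]
      exact (V₀.projectionOnto q hq n).2)
  exact hle2 hmem
end

section
/- Let Λ be the monoid generated by d and δ^{±1} (with δδ^{-1} = δ^{-1}δ = 1) and let ≤₁ be the smallest left- and right-invariant partial order on Λ generated by 1 <₁ dδ^{-1}d and δ <₁ dd. Then for every λ ∈ Λ, the set π(λ) = { μ ∈ Λ : μ <₁ λ } is finite. -/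
/-- Generators of the monoid `Λ`: `d`, `δ`, `δ⁻¹`. -/
inductive LamGen : Type
  | d : LamGen
  | del : LamGen
  | delInv : LamGen
  deriving DecidableEq

/-- The defining relations of `Λ`: `δ·δ⁻¹ = 1` and `δ⁻¹·δ = 1`. -/
def lamRel : FreeMonoid LamGen → FreeMonoid LamGen → Prop := fun x y =>
  (x = FreeMonoid.of LamGen.del * FreeMonoid.of LamGen.delInv ∧ y = 1) ∨
  (x = FreeMonoid.of LamGen.delInv * FreeMonoid.of LamGen.del ∧ y = 1)

def lamCon : Con (FreeMonoid LamGen) := conGen lamRel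

/-- The monoid `Λ`. -/
abbrev Lam : Type := lamCon.Quotient

def lamMk : FreeMonoid LamGen →* Lam := lamCon.mk'

def ld : Lam := lamMk (FreeMonoid.of LamGen.d)
def ldel : Lam := lamMk (FreeMonoid.of LamGen.del)
def ldelInv : Lam := lamMk (FreeMonoid.of LamGen.delInv)

/-- The generating relations of the order `<₁`: `1 <₁ dδ⁻¹d` and `δ <₁ dd`. -/
def ordBase : Lam → Lam → Prop := fun x y =>
  (x = 1 ∧ y = ld * ldelInv * ld) ∨ (x = ldel ∧ y = ld * ld)

/-- One step of the left- and right-invariant closure of the generating relations. -/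
def ordStep : Lam → Lam → Prop := fun x y =>
  ∃ a b u v : Lam, ordBase u v ∧ x = a * u * b ∧ y = a * v * b

/-! ### Auxiliary development: normal forms for `Lam` -/

instance : Fintype LamGen where
  elems := {LamGen.d, LamGen.del, LamGen.delInv}
  complete := by intro x; cases x <;> simp

/-- One step of right-to-left free reduction (cancel `δδ⁻¹` and `δ⁻¹δ`). -/
def nstep : LamGen → List LamGen → List LamGen
  | LamGen.del, LamGen.delInv :: t => t
  | LamGen.delInv, LamGen.del :: t => t
  | a, t => a :: t

/-- Normal form of a word. -/
def nf (l : List LamGen) : List LamGen := l.foldr nstep []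

/-- `a` followed by `b` is not a cancelling pair. -/
def ok : LamGen → LamGen → Prop := fun a b =>
  ¬(a = LamGen.del ∧ b = LamGen.delInv) ∧ ¬(a = LamGen.delInv ∧ b = LamGen.del)

/-- Reduced words: no adjacent cancelling pair. -/
def Red (l : List LamGen) : Prop := l.Chain' ok

lemma nf_cons (a : LamGen) (l : List LamGen) : nf (a :: l) = nstep a (nf l) := rfl

lemma nstep_of_ok (a : LamGen) (t : List LamGen) (h : ∀ b ∈ t.head?, ok a b) :
    nstep a t = a :: t := by
  cases t with
  | nil => cases a <;> rfl
  | cons b t =>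
    have hb := h b rfl
    cases a <;> cases b <;> first | rfl | exact absurd hb (by simp [ok])

lemma red_nstep (a : LamGen) {t : List LamGen} (h : Red t) : Red (nstep a t) := by
  cases t with
  | nil => cases a <;> exact List.isChain_singleton _
  | cons b t =>
    cases a <;> cases b <;>
      first
        | exact h.tail
        | exact List.isChain_cons_cons.2 ⟨by simp [ok], h⟩

lemma red_nf (l : List LamGen) : Red (nf l) := by
  induction l with
  | nil => exact List.isChain_nil
  | cons a l ih => exact red_nstep a ih

lemma nf_of_red {l : List LamGen} (h : Red l) : nf l = l := by
  induction l with
  | nil => rfl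
  | cons a l ih =>
    have h' := List.isChain_cons.1 h
    rw [nf_cons, ih h'.2, nstep_of_ok a l h'.1]

lemma nstep_length (a : LamGen) (t : List LamGen) : (nstep a t).length ≤ t.length + 1 := by
  cases t with
  | nil => cases a <;> exact Nat.le_refl _
  | cons b t =>
    cases a <;> cases b <;>
      first
        | exact Nat.le_refl _
        | exact Nat.le_succ_of_le (Nat.le_succ _)

lemma nf_length_le (l : List LamGen) : (nf l).length ≤ l.length := by
  induction l with
  | nil => exact Nat.le_refl 0
  | cons a l ih =>
    calc (nf (a :: l)).length ≤ (nf l).length + 1 := nstep_length a (nf l)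
    _ ≤ l.length + 1 := Nat.add_le_add_right ih 1

lemma nstep_nstep_cancel {a b : LamGen}
    (hab : (a = LamGen.del ∧ b = LamGen.delInv) ∨ (a = LamGen.delInv ∧ b = LamGen.del))
    {s : List LamGen} (hs : Red s) : nstep a (nstep b s) = s := by
  rcases hab with ⟨rfl, rfl⟩ | ⟨rfl, rfl⟩
  · cases s with
    | nil => rfl
    | cons c s' =>
      cases c with
      | d => rfl
      | delInv => rfl
      | del =>
        show nstep LamGen.del s' = LamGen.del :: s'
        exact nstep_of_ok _ s' (List.isChain_cons.1 hs).1
  · cases s with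
    | nil => rfl
    | cons c s' =>
      cases c with
      | d => rfl
      | del => rfl
      | delInv =>
        show nstep LamGen.delInv s' = LamGen.delInv :: s'
        exact nstep_of_ok _ s' (List.isChain_cons.1 hs).1

lemma nstep_append (a : LamGen) (t z : List LamGen) (ht : Red t) :
    nf (nstep a t ++ z) = nstep a (nf (t ++ z)) := by
  cases t with
  | nil => cases a <;> rfl
  | cons b t' =>
    by_cases hc : (a = LamGen.del ∧ b = LamGen.delInv) ∨ (a = LamGen.delInv ∧ b = LamGen.del)
    · have h1 : nstep a (b :: t') = t' := by
        rcases hc with ⟨rfl, rfl⟩ | ⟨rfl, rfl⟩ <;> rfl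
      rw [h1]
      have h2 : nf ((b :: t') ++ z) = nstep b (nf (t' ++ z)) := rfl
      rw [h2, nstep_nstep_cancel hc (red_nf (t' ++ z))]
    · have h1 : nstep a (b :: t') = a :: b :: t' := by
        cases a <;> cases b <;> first | rfl | exact absurd (by simp) hc
      rw [h1]
      rfl

lemma nf_nil : nf ([] : List LamGen) = [] := rfl

lemma nf_append_left (x z : List LamGen) : nf (x ++ z) = nf (nf x ++ z) := by
  induction x with
  | nil =>
    simp only [nf_nil, List.nil_append]
  | cons a x ih =>
    calc nf ((a :: x) ++ z) = nstep a (nf (x ++ z)) := rfl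
      _ = nstep a (nf (nf x ++ z)) := by rw [ih]
      _ = nf (nstep a (nf x) ++ z) := (nstep_append a (nf x) z (red_nf x)).symm
      _ = nf (nf (a :: x) ++ z) := rfl

lemma nf_append_right (x z : List LamGen) : nf (x ++ z) = nf (x ++ nf z) := by
  have h1 : nf (x ++ z) = x.foldr nstep (nf z) := List.foldr_append ..
  have h2 : nf (x ++ nf z) = x.foldr nstep (nf (nf z)) := List.foldr_append ..
  rw [h1, h2, nf_of_red (red_nf z)]

lemma nf_mul_congr {x y x' y' : List LamGen} (h : nf x = nf y) (h' : nf x' = nf y') :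
    nf (x ++ x') = nf (y ++ y') := by
  rw [nf_append_right x x', nf_append_right y y', h', nf_append_left x (nf y'),
    nf_append_left y (nf y'), h]

/-- The congruence "same normal form". -/
def conNf : Con (FreeMonoid LamGen) where
  r x y := nf x.toList = nf y.toList
  iseqv := ⟨fun _ => rfl, Eq.symm, Eq.trans⟩
  mul' := @fun w x y z h h' =>
    show nf (w * y).toList = nf (x * z).toList by
      rw [FreeMonoid.toList_mul, FreeMonoid.toList_mul]
      exact nf_mul_congr h h'

lemma lamCon_le_conNf : lamCon ≤ conNf := by
  apply Con.conGen_le.2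
  rintro x y (⟨rfl, rfl⟩ | ⟨rfl, rfl⟩) <;> rfl

lemma nf_eq_of_lamCon {x y : FreeMonoid LamGen} (h : lamCon x y) :
    nf x.toList = nf y.toList := lamCon_le_conNf h

/-- The normal form map on `Lam`. -/
def N : Lam → List LamGen :=
  Quotient.lift (fun x : FreeMonoid LamGen => nf x.toList)
    (fun _ _ h => nf_eq_of_lamCon h)

lemma N_mk (w : FreeMonoid LamGen) : N (lamMk w) = nf w.toList := rfl

lemma con_cons (a : LamGen) (t : List LamGen) :
    lamCon (FreeMonoid.of a * FreeMonoid.ofList t) (FreeMonoid.ofList (nstep a t)) := by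
  by_cases hc : ∃ t', (a = LamGen.del ∧ t = LamGen.delInv :: t') ∨
      (a = LamGen.delInv ∧ t = LamGen.del :: t')
  · obtain ⟨t', hc⟩ := hc
    rcases hc with ⟨rfl, rfl⟩ | ⟨rfl, rfl⟩
    · have h1 : FreeMonoid.of LamGen.del * FreeMonoid.ofList (LamGen.delInv :: t') =
          (FreeMonoid.of LamGen.del * FreeMonoid.of LamGen.delInv) * FreeMonoid.ofList t' := rfl
      have h2 : nstep LamGen.del (LamGen.delInv :: t') = t' := rfl
      rw [h1, h2]
      have hbase : lamCon (FreeMonoid.of LamGen.del * FreeMonoid.of LamGen.delInv) 1 :=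
        ConGen.Rel.of _ _ (Or.inl ⟨rfl, rfl⟩)
      have := lamCon.mul hbase (lamCon.refl (FreeMonoid.ofList t'))
      rwa [one_mul] at this
    · have h1 : FreeMonoid.of LamGen.delInv * FreeMonoid.ofList (LamGen.del :: t') =
          (FreeMonoid.of LamGen.delInv * FreeMonoid.of LamGen.del) * FreeMonoid.ofList t' := rfl
      have h2 : nstep LamGen.delInv (LamGen.del :: t') = t' := rfl
      rw [h1, h2]
      have hbase : lamCon (FreeMonoid.of LamGen.delInv * FreeMonoid.of LamGen.del) 1 :=
        ConGen.Rel.of _ _ (Or.inr ⟨rfl, rfl⟩)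
      have := lamCon.mul hbase (lamCon.refl (FreeMonoid.ofList t'))
      rwa [one_mul] at this
  · have h1 : nstep a t = a :: t := by
      cases t with
      | nil => cases a <;> rfl
      | cons b t' =>
        cases a <;> cases b <;>
          first
            | rfl
            | exact absurd ⟨t', by simp⟩ hc
    rw [h1]
    exact lamCon.refl _

lemma con_nf (w : List LamGen) :
    lamCon (FreeMonoid.ofList w) (FreeMonoid.ofList (nf w)) := by
  induction w with
  | nil => exact lamCon.refl _
  | cons a w ih =>
    have h1 : FreeMonoid.ofList (a :: w) = FreeMonoid.of a * FreeMonoid.ofList w := rfl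
    rw [h1, nf_cons]
    exact lamCon.trans (lamCon.mul (lamCon.refl (FreeMonoid.of a)) ih) (con_cons a (nf w))

lemma N_injective : Function.Injective N := by
  intro x y h
  obtain ⟨x, rfl⟩ := Con.mk'_surjective (c := lamCon) x
  obtain ⟨y, rfl⟩ := Con.mk'_surjective (c := lamCon) y
  have h' : nf (FreeMonoid.toList x) = nf (FreeMonoid.toList y) := h
  apply (Con.eq lamCon).2
  have hx := con_nf (FreeMonoid.toList x)
  have hy := con_nf (FreeMonoid.toList y)
  rw [FreeMonoid.ofList_toList] at hx hy
  rw [h'] at hx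
  exact lamCon.trans hx (lamCon.symm hy)

lemma ok_d_left (b : LamGen) : ok LamGen.d b := by cases b <;> simp [ok]
lemma ok_d_right (a : LamGen) : ok a LamGen.d := by cases a <;> simp [ok]

lemma red_sandwich {X Y v : List LamGen} (hX : Red X) (hY : Red Y) (hv : Red v)
    (hvh : v.head? = some LamGen.d) (hvl : v.getLast? = some LamGen.d) :
    Red (X ++ v ++ Y) := by
  apply List.isChain_append.2
  refine ⟨List.isChain_append.2 ⟨hX, hv, ?_⟩, hY, ?_⟩
  · intro x hx y hy
    rw [hvh, Option.mem_some_iff] at hy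
    subst hy; exact ok_d_right x
  · intro x hx y hy
    have hvne : v ≠ [] := by
      intro h; rw [h] at hvl; exact Option.some_ne_none _ hvl.symm
    rw [List.getLast?_append_of_ne_nil _ hvne, hvl, Option.mem_some_iff] at hx
    subst hx; exact ok_d_left y

lemma nf_conj (X Z Y : List LamGen) : nf (X ++ Z ++ Y) = nf (nf X ++ Z ++ nf Y) :=
  calc nf ((X ++ Z) ++ Y) = nf ((X ++ Z) ++ nf Y) := nf_append_right _ _
    _ = nf (X ++ (Z ++ nf Y)) := by rw [List.append_assoc]
    _ = nf (nf X ++ (Z ++ nf Y)) := nf_append_left _ _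
    _ = nf ((nf X ++ Z) ++ nf Y) := by rw [List.append_assoc]

lemma ordStep_lt {m l : Lam} (h : ordStep m l) : (N m).length < (N l).length := by
  obtain ⟨a, b, u, v, hbase, rfl, rfl⟩ := h
  obtain ⟨x, rfl⟩ := Con.mk'_surjective (c := lamCon) a
  obtain ⟨y, rfl⟩ := Con.mk'_surjective (c := lamCon) b
  set X := FreeMonoid.toList x with hXdef
  set Y := FreeMonoid.toList y with hYdef
  rcases hbase with ⟨rfl, rfl⟩ | ⟨rfl, rfl⟩
  · -- u = 1, v = d δ⁻¹ d
    have hm : lamCon.mk' x * 1 * lamCon.mk' y = lamMk (x * y) := by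
      rw [mul_one, map_mul]; rfl
    have hv : lamCon.mk' x * (ld * ldelInv * ld) * lamCon.mk' y =
        lamMk (x * (FreeMonoid.of LamGen.d * FreeMonoid.of LamGen.delInv *
          FreeMonoid.of LamGen.d) * y) := by
      rw [ld, ldelInv, map_mul, map_mul, map_mul, map_mul]; rfl
    rw [hm, hv, N_mk, N_mk]
    have htm : FreeMonoid.toList (x * y) = X ++ Y := rfl
    have htl : FreeMonoid.toList (x * (FreeMonoid.of LamGen.d * FreeMonoid.of LamGen.delInv *
        FreeMonoid.of LamGen.d) * y) =
        X ++ [LamGen.d, LamGen.delInv, LamGen.d] ++ Y := rfl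
    rw [htm, htl]
    have hred : Red (nf X ++ [LamGen.d, LamGen.delInv, LamGen.d] ++ nf Y) := by
      refine red_sandwich (red_nf X) (red_nf Y) ?_ rfl rfl
      exact List.isChain_cons_cons.2 ⟨ok_d_left _, List.isChain_cons_cons.2 ⟨ok_d_right _,
        List.isChain_singleton _⟩⟩
    have hl : nf (X ++ [LamGen.d, LamGen.delInv, LamGen.d] ++ Y) =
        nf X ++ [LamGen.d, LamGen.delInv, LamGen.d] ++ nf Y := by
      rw [nf_conj]; exact nf_of_red hred
    have hm2 : (nf (X ++ Y)).length ≤ (nf X).length + (nf Y).length := by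
      rw [nf_append_left, nf_append_right]
      calc (nf (nf X ++ nf Y)).length ≤ (nf X ++ nf Y).length := nf_length_le _
        _ = (nf X).length + (nf Y).length := List.length_append
    rw [hl]
    simp only [List.length_append, List.length_cons]
    omega
  · -- u = δ, v = dd
    have hm : lamCon.mk' x * ldel * lamCon.mk' y =
        lamMk (x * FreeMonoid.of LamGen.del * y) := by
      rw [ldel, map_mul, map_mul]; rfl
    have hv : lamCon.mk' x * (ld * ld) * lamCon.mk' y =
        lamMk (x * (FreeMonoid.of LamGen.d * FreeMonoid.of LamGen.d) * y) := by
      rw [ld, map_mul, map_mul, map_mul]; rfl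
    rw [hm, hv, N_mk, N_mk]
    have htm : FreeMonoid.toList (x * FreeMonoid.of LamGen.del * y) =
        X ++ [LamGen.del] ++ Y := rfl
    have htl : FreeMonoid.toList (x * (FreeMonoid.of LamGen.d * FreeMonoid.of LamGen.d) * y) =
        X ++ [LamGen.d, LamGen.d] ++ Y := rfl
    rw [htm, htl]
    have hred : Red (nf X ++ [LamGen.d, LamGen.d] ++ nf Y) := by
      refine red_sandwich (red_nf X) (red_nf Y) ?_ rfl rfl
      exact List.isChain_cons_cons.2 ⟨ok_d_left _, List.isChain_singleton _⟩
    have hl : nf (X ++ [LamGen.d, LamGen.d] ++ Y) = nf X ++ [LamGen.d, LamGen.d] ++ nf Y := by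
      rw [nf_conj]; exact nf_of_red hred
    have hm2 : (nf (X ++ [LamGen.del] ++ Y)).length ≤
        (nf X).length + 1 + (nf Y).length := by
      rw [nf_conj]
      calc (nf (nf X ++ [LamGen.del] ++ nf Y)).length
          ≤ (nf X ++ [LamGen.del] ++ nf Y).length := nf_length_le _
        _ = (nf X).length + 1 + (nf Y).length := by
            simp [List.length_append]; omega
    rw [hl]
    simp only [List.length_append, List.length_cons]
    omega

/-- For the smallest left- and right-invariant partial order `≤₁`
generated by `1 <₁ dδ⁻¹d`, `δ <₁ dd` (whose strict part is the transitive closure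
of the translated generating relations), the set `π(λ) = {μ : μ <₁ λ}` is finite
for every `λ ∈ Λ`. -/
theorem pi_lambda_finite (l : Lam) :
    {m : Lam | Relation.TransGen ordStep m l}.Finite := by
  have key : ∀ {m}, Relation.TransGen ordStep m l → (N m).length < (N l).length := by
    intro m h
    induction h with
    | single h => exact ordStep_lt h
    | tail _ h ih => exact lt_trans ih (ordStep_lt h)
  have hfin : {w : List LamGen | w.length < (N l).length}.Finite :=
    List.finite_length_lt _ _
  apply Set.Finite.subset (hfin.preimage (N_injective.injOn))
  intro m hm
  exact key hm
end

section
/- In the free algebra k⟨a,b,c,d,δ,δ^{-1}⟩ modulo the relations ac = ca, bd = db, ad − cb = δ = da − bc, δδ^{-1} = 1 = δ^{-1}δ, aδ^{-1}d − bδ^{-1}c = 1 = dδ^{-1}a − cδ^{-1}b, bδ^{-1}a − aδ^{-1}b = 0 = cδ^{-1}d − dδ^{-1}c, the set of monomials δ^{x₁}w₁δ^{x₂}w₂⋯wₙδ^{xₙ₊₁} — where xᵢ ∈ ℤ, xᵢ ≠ 0 for interior indices, each wᵢ is a nonempty word in a,b,c,d with non-decreasing row index, and whenever an interior xᵢ =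 −1 the column index of the letters adjacent to δ^{-1} is non-decreasing — forms a k-vector space basis of the quotient algebra O_nc(GL₂). -/
/-- The six generators `a, b, c, d, δ, δ⁻¹` of `O_nc(GL₂)`. -/
inductive GL2Gen : Type
  | a : GL2Gen
  | b : GL2Gen
  | c : GL2Gen
  | d : GL2Gen
  | del : GL2Gen
  | delInv : GL2Gen
  deriving DecidableEq

open GL2Gen

/-- The free algebra on the six generators. -/
abbrev FGL2 (k : Type) [Field k] : Type := FreeAlgebra k GL2Gen

namespace GL2Rel

variable (k : Type) [Field k]

local notation "ι" => FreeAlgebra.ι k (X := GL2Gen)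

/-- The defining relations of `O_nc(GL₂)`. -/
inductive rel : FGL2 k → FGL2 k → Prop
  | ac_comm : rel (ι a * ι c) (ι c * ι a)
  | bd_comm : rel (ι b * ι d) (ι d * ι b)
  | det1 : rel (ι a * ι d - ι c * ι b) (ι del)
  | det2 : rel (ι d * ι a - ι b * ι c) (ι del)
  | delInv1 : rel (ι del * ι delInv) 1
  | delInv2 : rel (ι delInv * ι del) 1
  | anti1 : rel (ι a * ι delInv * ι d - ι b * ι delInv * ι c) 1
  | anti2 : rel (ι d * ι delInv * ι a - ι c * ι delInv * ι b) 1
  | anti3 : rel (ι b * ι delInv * ι a - ι a * ι delInv * ι b) 0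
  | anti4 : rel (ι c * ι delInv * ι d - ι d * ι delInv * ι c) 0

end GL2Rel

/-- The algebra `O_nc(GL₂) = k⟨a,b,c,d,δ,δ⁻¹⟩/I`. -/
abbrev OncGL2 (k : Type) [Field k] : Type := RingQuot (GL2Rel.rel k)

/-- The images of the generators in `O_nc(GL₂)`. -/
noncomputable def gl2gen (k : Type) [Field k] (g : GL2Gen) : OncGL2 k :=
  RingQuot.mkAlgHom k (GL2Rel.rel k) (FreeAlgebra.ι k g)

/-- The forbidden subwords characterizing the normal-form monomials from the
Bergman diamond lemma (order `δ⁻¹ < δ < a < b < c < d`):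
decreasing row index inside a letter word (`ca, cb, da, db`), mixed `δ`-powers
(`δδ⁻¹, δ⁻¹δ`), and for an interior block `δ⁻¹` a decreasing column index
around it (`bδ⁻¹a, bδ⁻¹c, dδ⁻¹a, dδ⁻¹c`). -/
def forbiddenWords : List (List GL2Gen) :=
  [[c, a], [c, b], [d, a], [d, b], [del, delInv], [delInv, del],
   [b, delInv, a], [b, delInv, c], [d, delInv, a], [d, delInv, c]]

/-- A word is in normal form iff it avoids all forbidden subwords; such words are
exactly the monomials `δ^{x₁}w₁δ^{x₂}w₂⋯wₙδ^{xₙ₊₁}` of the statement. -/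
def normalWord (l : List GL2Gen) : Prop :=
  ∀ p ∈ forbiddenWords, ¬ p <:+: l

namespace GL2NF
open GL2Gen

abbrev W := List GL2Gen

def val : GL2Gen → ℕ
  | delInv => 0 | del => 1 | a => 2 | b => 3 | c => 4 | d => 5

def μ : W → ℕ
  | [] => 0
  | g :: t => (val g + 1) * 7 ^ t.length + μ t

lemma μ_lt_pow (w : W) : μ w < 7 ^ w.length := by
  induction w with
  | nil => simp [μ]
  | cons g t ih =>
    have hv : val g + 1 ≤ 6 := by cases g <;> simp [val]
    have hp : 0 < 7 ^ t.length := pow_pos (by norm_num) _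
    have : μ (g::t) = (val g + 1) * 7 ^ t.length + μ t := rfl
    rw [this, List.length_cons, pow_succ]
    nlinarith

lemma μ_ge (w : W) (h : w ≠ []) : 7 ^ (w.length - 1) ≤ μ w := by
  match w with
  | g :: t =>
    have : μ (g::t) = (val g + 1) * 7 ^ t.length + μ t := rfl
    rw [this, List.length_cons]
    simp only [Nat.add_sub_cancel]
    nlinarith [Nat.zero_le (μ t), Nat.zero_le (val g), pow_pos (show 0<7 by norm_num) t.length]

lemma μ_append (x y : W) : μ (x ++ y) = μ x * 7 ^ y.length + μ y := by
  induction x with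
  | nil => simp [μ]
  | cons g t ih =>
    show (val g + 1) * 7 ^ (t ++ y).length + μ (t ++ y) = ((val g + 1) * 7 ^ t.length + μ t) * 7 ^ y.length + μ y
    rw [ih, List.length_append, pow_add]; ring

lemma μ_pos (w : W) (h : w ≠ []) : 0 < μ w := by
  have := μ_ge w h
  have : (0:ℕ) < 7 ^ (w.length - 1) := pow_pos (by norm_num) _
  omega

lemma μ_ctx_lt (x u v t : W) (hl : u.length ≤ v.length) (hμ : μ u < μ v) :
    μ (x ++ (u ++ t)) < μ (x ++ (v ++ t)) := by
  rw [μ_append x (u++t), μ_append x (v++t), μ_append u t, μ_append v t]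
  have hxm : μ x * 7 ^ (u ++ t).length ≤ μ x * 7 ^ (v ++ t).length := by
    apply Nat.mul_le_mul_left
    apply Nat.pow_le_pow_right (by norm_num)
    simp [List.length_append]; omega
  have htlt : μ t < 7 ^ t.length := μ_lt_pow t
  rcases Nat.lt_or_ge u.length v.length with hlt | hge
  · -- u strictly shorter
    have hv : v ≠ [] := by intro h; subst h; simp at hlt
    have h1 : 7 ^ (v.length - 1) ≤ μ v := μ_ge v hv
    have h2 : μ u < 7 ^ u.length := μ_lt_pow u
    have h3 : 7 ^ u.length ≤ 7 ^ (v.length - 1) := Nat.pow_le_pow_right (by norm_num) (by omega)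
    have key : μ u * 7 ^ t.length + μ t < μ v * 7 ^ t.length := by
      have : (μ u + 1) * 7 ^ t.length ≤ μ v * 7 ^ t.length := by
        apply Nat.mul_le_mul_right; omega
      have hp : 0 < 7 ^ t.length := pow_pos (by norm_num) _
      nlinarith
    omega
  · have : u.length = v.length := by omega
    have key : μ u * 7 ^ t.length + μ t < μ v * 7 ^ t.length + μ t := by
      have hp : 0 < 7 ^ t.length := pow_pos (by norm_num) _
      have : μ u * 7 ^ t.length < μ v * 7 ^ t.length := by
        exact Nat.mul_lt_mul_of_lt_of_le hμ le_rfl hp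
      omega
    omega

/-- One rewriting step at the front of a word, if a forbidden pattern is a prefix. -/
def step : W → Option (List (ℤ × W))
  | .c :: .a :: t => some [(1, .a :: .c :: t)]
  | .c :: .b :: t => some [(1, .a :: .d :: t), (-1, .del :: t)]
  | .d :: .a :: t => some [(1, .del :: t), (1, .b :: .c :: t)]
  | .d :: .b :: t => some [(1, .b :: .d :: t)]
  | .del :: .delInv :: t => some [(1, t)]
  | .delInv :: .del :: t => some [(1, t)]
  | .b :: .delInv :: .a :: t => some [(1, .a :: .delInv :: .b :: t)]
  | .b :: .delInv :: .c :: t => some [(1, .a :: .delInv :: .d :: t), (-1, t)]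
  | .d :: .delInv :: .a :: t => some [(1, .c :: .delInv :: .b :: t), (1, t)]
  | .d :: .delInv :: .c :: t => some [(1, .c :: .delInv :: .d :: t)]
  | _ => none

/-- The ten rewrite rules. -/
inductive Rule : W → List (ℤ × W) → Prop
  | r1 : Rule [c, a] [(1, [a, c])]
  | r2 : Rule [c, b] [(1, [a, d]), (-1, [del])]
  | r3 : Rule [d, a] [(1, [del]), (1, [b, c])]
  | r4 : Rule [d, b] [(1, [b, d])]
  | r5 : Rule [del, delInv] [(1, [])]
  | r6 : Rule [delInv, del] [(1, [])]
  | r7 : Rule [b, delInv, a] [(1, [a, delInv, b])]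
  | r8 : Rule [b, delInv, c] [(1, [a, delInv, d]), (-1, [])]
  | r9 : Rule [d, delInv, a] [(1, [c, delInv, b]), (1, [])]
  | r10 : Rule [d, delInv, c] [(1, [c, delInv, d])]

lemma Rule.step_eq {p r} (h : Rule p r) (t : W) :
    step (p ++ t) = some (r.map fun q => (q.1, q.2 ++ t)) := by
  cases h <;> rfl

lemma Rule.mem_forbidden {p r} (h : Rule p r) : p ∈ forbiddenWords := by
  cases h <;> simp [forbiddenWords]

lemma forbidden_rule {p} (h : p ∈ forbiddenWords) : ∃ r, Rule p r := by
  fin_cases h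
  exacts [⟨_, Rule.r1⟩, ⟨_, Rule.r2⟩, ⟨_, Rule.r3⟩, ⟨_, Rule.r4⟩, ⟨_, Rule.r5⟩,
    ⟨_, Rule.r6⟩, ⟨_, Rule.r7⟩, ⟨_, Rule.r8⟩, ⟨_, Rule.r9⟩, ⟨_, Rule.r10⟩]

lemma Rule.ne_nil {p r} (h : Rule p r) : p ≠ [] := by cases h <;> simp

lemma Rule.decr {p r} (h : Rule p r) : ∀ q ∈ r, μ q.2 < μ p ∧ q.2.length ≤ p.length := by
  cases h <;> decide

lemma Rule.prefix_eq {p r p' r'} (h : Rule p r) (h' : Rule p' r') (hp : p <+: p') : p = p' := by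
  cases h <;> cases h' <;> revert hp <;> decide

lemma Rule.det {p r r'} (h : Rule p r) (h' : Rule p r') : r = r' := by
  cases h <;> cases h' <;> rfl

/-- `step z` succeeds exactly on rule prefixes. -/
lemma step_spec {z l} (h : step z = some l) :
    ∃ p r t, Rule p r ∧ z = p ++ t ∧ l = r.map fun q => (q.1, q.2 ++ t) := by
  unfold step at h
  split at h
  · exact ⟨_, _, _, Rule.r1, rfl, by simpa using h.symm⟩
  · exact ⟨_, _, _, Rule.r2, rfl, by simpa using h.symm⟩
  · exact ⟨_, _, _, Rule.r3, rfl, by simpa using h.symm⟩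
  · exact ⟨_, _, _, Rule.r4, rfl, by simpa using h.symm⟩
  · exact ⟨_, _, _, Rule.r5, rfl, by simpa using h.symm⟩
  · exact ⟨_, _, _, Rule.r6, rfl, by simpa using h.symm⟩
  · exact ⟨_, _, _, Rule.r7, rfl, by simpa using h.symm⟩
  · exact ⟨_, _, _, Rule.r8, rfl, by simpa using h.symm⟩
  · exact ⟨_, _, _, Rule.r9, rfl, by simpa using h.symm⟩
  · exact ⟨_, _, _, Rule.r10, rfl, by simpa using h.symm⟩
  · simp at h

/-- Leftmost rewriting: scan the word for the first position matching a rule. -/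
def rw1 : W → Option (List (ℤ × W))
  | [] => none
  | g :: t =>
    match step (g :: t) with
    | some l => some l
    | none => (rw1 t).map (List.map fun p => (p.1, g :: p.2))

lemma rw1_eq_none_iff (w : W) : rw1 w = none ↔ ∀ x z, w = x ++ z → step z = none := by
  induction w with
  | nil =>
    simp only [rw1, true_iff]
    rintro x z hz
    have : z = [] := by
      rcases List.append_eq_nil_iff.mp hz.symm with ⟨h1, h2⟩; exact h2
    subst this; rfl
  | cons g t ih =>
    constructor
    · intro h x z hz
      rw [rw1] at h
      rcases hs : step (g :: t) with _ | l
      · rw [hs] at h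
        simp only [Option.map_eq_none_iff] at h
        rcases x with _ | ⟨g', x'⟩
        · simp at hz; subst hz; exact hs
        · simp only [List.cons_append, List.cons.injEq] at hz
          exact (ih.mp h) x' z hz.2
      · rw [hs] at h; simp at h
    · intro h
      rw [rw1]
      have hs : step (g :: t) = none := h [] (g :: t) rfl
      rw [hs]
      simp only [Option.map_eq_none_iff]
      exact ih.mpr fun x z hz => h (g :: x) z (by simp [hz])

lemma rw1_spec {w l} (h : rw1 w = some l) :
    ∃ x p t r, Rule p r ∧ w = x ++ p ++ t ∧ l = r.map fun q => (q.1, x ++ q.2 ++ t) := by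
  induction w generalizing l with
  | nil => simp [rw1] at h
  | cons g t ih =>
    rw [rw1] at h
    rcases hs : step (g :: t) with _ | l'
    · rw [hs] at h
      simp only [Option.map_eq_some_iff] at h
      obtain ⟨l'', hl'', rfl⟩ := h
      obtain ⟨x, p, t', r, hr, hw, hl⟩ := ih hl''
      exact ⟨g :: x, p, t', r, hr, by simp [hw], by simp [hl, List.map_map]⟩
    · rw [hs] at h
      obtain ⟨p, r, t', hr, hw, hl⟩ := step_spec hs
      refine ⟨[], p, t', r, hr, by simpa using hw, ?_⟩
      simp only [List.nil_append]
      cases h; exact hl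

lemma μ_rw1 {w l} (h : rw1 w = some l) : ∀ q ∈ l, μ q.2 < μ w := by
  obtain ⟨x, p, t, r, hr, hw, hl⟩ := rw1_spec h
  subst hw hl
  intro q hq
  simp only [List.mem_map] at hq
  obtain ⟨q', hq', rfl⟩ := hq
  obtain ⟨h1, h2⟩ := hr.decr q' hq'
  have := μ_ctx_lt x q'.2 p t h2 h1
  simpa [List.append_assoc] using this

lemma rw1_normal {w} (h : rw1 w = none) : normalWord w := by
  intro p hp hinf
  obtain ⟨r, hr⟩ := forbidden_rule hp
  obtain ⟨x, t, hw⟩ := hinf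
  have := (rw1_eq_none_iff w).mp h x (p ++ t) (by simp [← hw])
  rw [hr.step_eq] at this
  simp at this

lemma normal_rw1 {w} (h : normalWord w) : rw1 w = none := by
  rw [rw1_eq_none_iff]
  intro x z hz
  rcases hs : step z with _ | l
  · rfl
  · exfalso
    obtain ⟨p, r, t, hr, hzz, _⟩ := step_spec hs
    exact h p hr.mem_forbidden ⟨x, t, by simp [hz, hzz]⟩
variable (k : Type) [Field k]

/-- The free `k`-module on normal words. -/
abbrev V : Type := {l : W // normalWord l} →₀ k

/-- The normal form function, by leftmost rewriting. -/
noncomputable def nf (w : W) : V k :=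
  match h : rw1 w with
  | none => Finsupp.single ⟨w, rw1_normal h⟩ 1
  | some l => (l.attach.map fun q => (q.1.1 : ℤ) • nf q.1.2).sum
termination_by μ w
decreasing_by exact μ_rw1 h q.1 q.2

variable {k}

lemma nf_of_none {w} (h : rw1 w = none) : nf k w = Finsupp.single ⟨w, rw1_normal h⟩ 1 := by
  rw [nf]
  split
  · rfl
  · next l h' => rw [h] at h'; cases h'

lemma nf_of_some {w l} (h : rw1 w = some l) :
    nf k w = (l.map fun q => (q.1 : ℤ) • nf k q.2).sum := by
  rw [nf]
  split
  · next h' => rw [h] at h'; cases h'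
  next l' h' =>
  rw [h] at h'
  cases h'
  exact congrArg List.sum (List.attach_map_val (l := l) (f := fun p => (p.1 : ℤ) • nf k p.2))

lemma nf_normal {w} (h : normalWord w) : nf k w = Finsupp.single ⟨w, h⟩ 1 :=
  nf_of_none (normal_rw1 h)

/-- Sum of the rewrite images under `nf` with context `x … t`. -/
noncomputable def S (x : W) (r : List (ℤ × W)) (t : W) : V k :=
  (r.map fun q => (q.1 : ℤ) • nf k (x ++ q.2 ++ t)).sum
section SumLemmas
variable {α β M : Type*} [AddCommMonoid M]

lemma sum_map_add (l : List α) (f g : α → M) :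
    (l.map fun x => f x + g x).sum = (l.map f).sum + (l.map g).sum := by
  induction l with
  | nil => simp
  | cons x l ih => simp [ih]; abel

lemma sum_swap (l₁ : List α) (l₂ : List β) (f : α → β → M) :
    (l₁.map fun i => (l₂.map (f i)).sum).sum = (l₂.map fun j => (l₁.map fun i => f i j).sum).sum := by
  induction l₁ with
  | nil => simp
  | cons x l ih => simp only [List.map_cons, List.sum_cons, ih, ← sum_map_add]

lemma smul_sum' {N : Type*} [AddCommGroup N] (z : ℤ) (l : List N) :
    z • l.sum = (l.map (z • ·)).sum := by
  induction l with
  | nil => simp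
  | cons x l ih => simp [smul_add, ih]

end SumLemmas

variable {k : Type} [Field k]

/-- The key "diamond" step: two rewrites of the same word give the same value,
assuming the invariance statement for all `μ`-smaller words. -/
lemma diamond {x₁ p₁ t₁ x₂ p₂ t₂ : W} {r₁ r₂ : List (ℤ × W)}
    (h1 : Rule p₁ r₁) (h2 : Rule p₂ r₂)
    (he : x₁ ++ p₁ ++ t₁ = x₂ ++ p₂ ++ t₂) (hlen : x₁.length ≤ x₂.length)
    (hIH : ∀ v x p t r, μ v < μ (x₁ ++ p₁ ++ t₁) → Rule p r → v = x ++ p ++ t →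
      nf k v = S x r t) :
    (S x₁ r₁ t₁ : V k) = S x₂ r₂ t₂ := by
  have he' : x₁ ++ (p₁ ++ t₁) = x₂ ++ (p₂ ++ t₂) := by simpa [List.append_assoc] using he
  suffices core : ∀ m, x₂ = x₁ ++ m → p₁ ++ t₁ = m ++ (p₂ ++ t₂) → (S x₁ r₁ t₁ : V k) = S x₂ r₂ t₂ by
    rcases List.append_eq_append_iff.mp he' with ⟨m, hm1, hm2⟩ | ⟨m, hm1, hm2⟩
    · exact core m hm1 hm2
    · have hm0 : m = [] := by
        have := congrArg List.length hm1
        simp only [List.length_append] at this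
        have : m.length = 0 := by omega
        exact List.eq_nil_of_length_eq_zero this
      subst hm0
      simp only [List.append_nil] at hm1
      exact core [] (by simp [hm1]) (by simpa using hm2.symm)
  intro m hx₂ hpt
  -- convenient reformulation of the induction hypothesis
  have ih' : ∀ (y p' s : W) (r' : List (ℤ × W)), Rule p' r' →
      μ (x₁ ++ (y ++ (p' ++ s))) < μ (x₁ ++ p₁ ++ t₁) →
      nf k (x₁ ++ (y ++ (p' ++ s))) =
        (r'.map fun q => (q.1 : ℤ) • nf k (x₁ ++ (y ++ (q.2 ++ s)))).sum := by
    intro y p' s r' hr' hμ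
    have := hIH (x₁ ++ (y ++ (p' ++ s))) (x₁ ++ y) p' s r' hμ hr' (by simp [List.append_assoc])
    rw [this]
    unfold S
    congr 1
    apply List.map_congr_left
    intro q hq
    simp [List.append_assoc]
  rcases Nat.lt_or_ge m.length p₁.length with hlt | hge
  · -- overlap or equal position
    rcases m with _ | ⟨g0, m⟩
    · -- same position
      simp only [List.nil_append] at hpt
      subst hx₂
      have hpp : p₁ = p₂ := by
        rcases le_total p₁.length p₂.length with hl | hl
        · exact h1.prefix_eq h2 (List.prefix_of_prefix_length_le ⟨t₁, hpt⟩ ⟨t₂, rfl⟩ hl)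
        · exact (h2.prefix_eq h1 (List.prefix_of_prefix_length_le ⟨t₂, hpt.symm⟩ ⟨t₁, rfl⟩ hl)).symm
      subst hpp
      have htt : t₁ = t₂ := List.append_cancel_left hpt
      subst htt
      rw [h1.det h2]
      simp [S]
    · -- genuine overlap: enumerate the ambiguities
      have hmp : (g0 :: m) <+: p₁ := by
        refine List.prefix_of_prefix_length_le ⟨p₂ ++ t₂, ?_⟩ ⟨t₁, rfl⟩ (le_of_lt hlt)
        simpa [List.append_assoc] using hpt.symm
      obtain ⟨m₁, hm₁⟩ := hmp
      have hm₁t : m₁ ++ t₁ = p₂ ++ t₂ := by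
        have := hpt
        rw [← hm₁, List.append_assoc] at this
        exact List.append_cancel_left this
      have hm₁len : 0 < m₁.length := by
        have hL := congrArg List.length hm₁
        rw [List.length_append] at hL
        omega
      subst hx₂
      cases h1 with
      | r1 =>
        rw [List.cons_append] at hm₁
        injection hm₁ with hg hm₂
        subst hg
        rcases m with _ | ⟨g1, m⟩
        · simp only [List.nil_append] at hm₂
          subst hm₂
          cases h2 <;> simp at hm₁t
        · rw [List.cons_append] at hm₂
          injection hm₂ with hg1 hm₃
          have hnil : m₁ = [] := (List.append_eq_nil_iff.mp hm₃).2
          rw [hnil] at hm₁len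
          simp at hm₁len
      | r2 =>
        rw [List.cons_append] at hm₁
        injection hm₁ with hg hm₂
        subst hg
        rcases m with _ | ⟨g1, m⟩
        · simp only [List.nil_append] at hm₂
          subst hm₂
          cases h2 <;> simp at hm₁t
          · subst hm₁t
            have k1 := ih' [a] [d, delInv, a] t₂ _ Rule.r9 (by
              have := μ_ctx_lt x₁ [a, d, delInv, a] [c, b, delInv, a] t₂ (by decide) (by decide)
              simpa [List.append_assoc] using this)
            have k2 := ih' ([] : W) [del, delInv] (a :: t₂) _ Rule.r5 (by
              have := μ_ctx_lt x₁ [del, delInv, a] [c, b, delInv, a] t₂ (by decide) (by decide)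
              simpa [List.append_assoc] using this)
            have k3 := ih' ([] : W) [c, a] (delInv :: b :: t₂) _ Rule.r1 (by
              have := μ_ctx_lt x₁ [c, a, delInv, b] [c, b, delInv, a] t₂ (by decide) (by decide)
              simpa [List.append_assoc] using this)
            simp only [S, List.map_cons, List.map_nil, List.sum_cons, List.sum_nil,
              List.cons_append, List.nil_append, List.append_assoc, one_smul, neg_smul,
              add_zero] at k1 k2 k3 ⊢
            try rw [k1]
            try rw [k2]
            try rw [k3]
            try abel
          · subst hm₁t
            have k1 := ih' [a] [d, delInv, c] t₂ _ Rule.r10 (by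
              have := μ_ctx_lt x₁ [a, d, delInv, c] [c, b, delInv, c] t₂ (by decide) (by decide)
              simpa [List.append_assoc] using this)
            have k2 := ih' ([] : W) [del, delInv] (c :: t₂) _ Rule.r5 (by
              have := μ_ctx_lt x₁ [del, delInv, c] [c, b, delInv, c] t₂ (by decide) (by decide)
              simpa [List.append_assoc] using this)
            have k3 := ih' ([] : W) [c, a] (delInv :: d :: t₂) _ Rule.r1 (by
              have := μ_ctx_lt x₁ [c, a, delInv, d] [c, b, delInv, c] t₂ (by decide) (by decide)
              simpa [List.append_assoc] using this)
            simp only [S, List.map_cons, List.map_nil, List.sum_cons, List.sum_nil,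
              List.cons_append, List.nil_append, List.append_assoc, one_smul, neg_smul,
              add_zero] at k1 k2 k3 ⊢
            try rw [k1]
            try rw [k2]
            try rw [k3]
            try abel
        · rw [List.cons_append] at hm₂
          injection hm₂ with hg1 hm₃
          have hnil : m₁ = [] := (List.append_eq_nil_iff.mp hm₃).2
          rw [hnil] at hm₁len
          simp at hm₁len
      | r3 =>
        rw [List.cons_append] at hm₁
        injection hm₁ with hg hm₂
        subst hg
        rcases m with _ | ⟨g1, m⟩
        · simp only [List.nil_append] at hm₂
          subst hm₂
          cases h2 <;> simp at hm₁t
        · rw [List.cons_append] at hm₂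
          injection hm₂ with hg1 hm₃
          have hnil : m₁ = [] := (List.append_eq_nil_iff.mp hm₃).2
          rw [hnil] at hm₁len
          simp at hm₁len
      | r4 =>
        rw [List.cons_append] at hm₁
        injection hm₁ with hg hm₂
        subst hg
        rcases m with _ | ⟨g1, m⟩
        · simp only [List.nil_append] at hm₂
          subst hm₂
          cases h2 <;> simp at hm₁t
          · subst hm₁t
            have k1 := ih' [b] [d, delInv, a] t₂ _ Rule.r9 (by
              have := μ_ctx_lt x₁ [b, d, delInv, a] [d, b, delInv, a] t₂ (by decide) (by decide)
              simpa [List.append_assoc] using this)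
            have k2 := ih' ([] : W) [d, a] (delInv :: b :: t₂) _ Rule.r3 (by
              have := μ_ctx_lt x₁ [d, a, delInv, b] [d, b, delInv, a] t₂ (by decide) (by decide)
              simpa [List.append_assoc] using this)
            have k3 := ih' ([] : W) [del, delInv] (b :: t₂) _ Rule.r5 (by
              have := μ_ctx_lt x₁ [del, delInv, b] [d, b, delInv, a] t₂ (by decide) (by decide)
              simpa [List.append_assoc] using this)
            simp only [S, List.map_cons, List.map_nil, List.sum_cons, List.sum_nil,
              List.cons_append, List.nil_append, List.append_assoc, one_smul, neg_smul,
              add_zero] at k1 k2 k3 ⊢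
            try rw [k1]
            try rw [k2]
            try rw [k3]
            try abel
          · subst hm₁t
            have k1 := ih' [b] [d, delInv, c] t₂ _ Rule.r10 (by
              have := μ_ctx_lt x₁ [b, d, delInv, c] [d, b, delInv, c] t₂ (by decide) (by decide)
              simpa [List.append_assoc] using this)
            have k2 := ih' ([] : W) [d, a] (delInv :: d :: t₂) _ Rule.r3 (by
              have := μ_ctx_lt x₁ [d, a, delInv, d] [d, b, delInv, c] t₂ (by decide) (by decide)
              simpa [List.append_assoc] using this)
            have k3 := ih' ([] : W) [del, delInv] (d :: t₂) _ Rule.r5 (by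
              have := μ_ctx_lt x₁ [del, delInv, d] [d, b, delInv, c] t₂ (by decide) (by decide)
              simpa [List.append_assoc] using this)
            simp only [S, List.map_cons, List.map_nil, List.sum_cons, List.sum_nil,
              List.cons_append, List.nil_append, List.append_assoc, one_smul, neg_smul,
              add_zero] at k1 k2 k3 ⊢
            try rw [k1]
            try rw [k2]
            try rw [k3]
            try abel
        · rw [List.cons_append] at hm₂
          injection hm₂ with hg1 hm₃
          have hnil : m₁ = [] := (List.append_eq_nil_iff.mp hm₃).2
          rw [hnil] at hm₁len
          simp at hm₁len
      | r5 =>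
        rw [List.cons_append] at hm₁
        injection hm₁ with hg hm₂
        subst hg
        rcases m with _ | ⟨g1, m⟩
        · simp only [List.nil_append] at hm₂
          subst hm₂
          cases h2 <;> simp at hm₁t
          · subst hm₁t
            simp [S, List.append_assoc]
        · rw [List.cons_append] at hm₂
          injection hm₂ with hg1 hm₃
          have hnil : m₁ = [] := (List.append_eq_nil_iff.mp hm₃).2
          rw [hnil] at hm₁len
          simp at hm₁len
      | r6 =>
        rw [List.cons_append] at hm₁
        injection hm₁ with hg hm₂
        subst hg
        rcases m with _ | ⟨g1, m⟩
        · simp only [List.nil_append] at hm₂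
          subst hm₂
          cases h2 <;> simp at hm₁t
          · subst hm₁t
            simp [S, List.append_assoc]
        · rw [List.cons_append] at hm₂
          injection hm₂ with hg1 hm₃
          have hnil : m₁ = [] := (List.append_eq_nil_iff.mp hm₃).2
          rw [hnil] at hm₁len
          simp at hm₁len
      | r7 =>
        rw [List.cons_append] at hm₁
        injection hm₁ with hg hm₂
        subst hg
        rcases m with _ | ⟨g1, m⟩
        · simp only [List.nil_append] at hm₂
          subst hm₂
          cases h2 <;> simp at hm₁t
        · rw [List.cons_append] at hm₂
          injection hm₂ with hg1 hm₃
          subst hg1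
          rcases m with _ | ⟨g2, m⟩
          · simp only [List.nil_append] at hm₃
            subst hm₃
            cases h2 <;> simp at hm₁t
          · rw [List.cons_append] at hm₃
            injection hm₃ with hg2 hm₄
            have hnil : m₁ = [] := (List.append_eq_nil_iff.mp hm₄).2
            rw [hnil] at hm₁len
            simp at hm₁len
      | r8 =>
        rw [List.cons_append] at hm₁
        injection hm₁ with hg hm₂
        subst hg
        rcases m with _ | ⟨g1, m⟩
        · simp only [List.nil_append] at hm₂
          subst hm₂
          cases h2 <;> simp at hm₁t
        · rw [List.cons_append] at hm₂
          injection hm₂ with hg1 hm₃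
          subst hg1
          rcases m with _ | ⟨g2, m⟩
          · simp only [List.nil_append] at hm₃
            subst hm₃
            cases h2 <;> simp at hm₁t
            · subst hm₁t
              have k1 := ih' [a, delInv] [d, a] t₂ _ Rule.r3 (by
                have := μ_ctx_lt x₁ [a, delInv, d, a] [b, delInv, c, a] t₂ (by decide) (by decide)
                simpa [List.append_assoc] using this)
              have k2 := ih' [a] [delInv, del] t₂ _ Rule.r6 (by
                have := μ_ctx_lt x₁ [a, delInv, del] [b, delInv, c, a] t₂ (by decide) (by decide)
                simpa [List.append_assoc] using this)
              have k3 := ih' ([] : W) [b, delInv, a] (c :: t₂) _ Rule.r7 (by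
                have := μ_ctx_lt x₁ [b, delInv, a, c] [b, delInv, c, a] t₂ (by decide) (by decide)
                simpa [List.append_assoc] using this)
              simp only [S, List.map_cons, List.map_nil, List.sum_cons, List.sum_nil,
                List.cons_append, List.nil_append, List.append_assoc, one_smul, neg_smul,
                add_zero] at k1 k2 k3 ⊢
              try rw [k1]
              try rw [k2]
              try rw [k3]
              try abel
            · subst hm₁t
              have k1 := ih' [a, delInv] [d, b] t₂ _ Rule.r4 (by
                have := μ_ctx_lt x₁ [a, delInv, d, b] [b, delInv, c, b] t₂ (by decide) (by decide)
                simpa [List.append_assoc] using this)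
              have k2 := ih' ([] : W) [b, delInv, a] (d :: t₂) _ Rule.r7 (by
                have := μ_ctx_lt x₁ [b, delInv, a, d] [b, delInv, c, b] t₂ (by decide) (by decide)
                simpa [List.append_assoc] using this)
              have k3 := ih' [b] [delInv, del] t₂ _ Rule.r6 (by
                have := μ_ctx_lt x₁ [b, delInv, del] [b, delInv, c, b] t₂ (by decide) (by decide)
                simpa [List.append_assoc] using this)
              simp only [S, List.map_cons, List.map_nil, List.sum_cons, List.sum_nil,
                List.cons_append, List.nil_append, List.append_assoc, one_smul, neg_smul,
                add_zero] at k1 k2 k3 ⊢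
              try rw [k1]
              try rw [k2]
              try rw [k3]
              try abel
          · rw [List.cons_append] at hm₃
            injection hm₃ with hg2 hm₄
            have hnil : m₁ = [] := (List.append_eq_nil_iff.mp hm₄).2
            rw [hnil] at hm₁len
            simp at hm₁len
      | r9 =>
        rw [List.cons_append] at hm₁
        injection hm₁ with hg hm₂
        subst hg
        rcases m with _ | ⟨g1, m⟩
        · simp only [List.nil_append] at hm₂
          subst hm₂
          cases h2 <;> simp at hm₁t
        · rw [List.cons_append] at hm₂
          injection hm₂ with hg1 hm₃
          subst hg1
          rcases m with _ | ⟨g2, m⟩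
          · simp only [List.nil_append] at hm₃
            subst hm₃
            cases h2 <;> simp at hm₁t
          · rw [List.cons_append] at hm₃
            injection hm₃ with hg2 hm₄
            have hnil : m₁ = [] := (List.append_eq_nil_iff.mp hm₄).2
            rw [hnil] at hm₁len
            simp at hm₁len
      | r10 =>
        rw [List.cons_append] at hm₁
        injection hm₁ with hg hm₂
        subst hg
        rcases m with _ | ⟨g1, m⟩
        · simp only [List.nil_append] at hm₂
          subst hm₂
          cases h2 <;> simp at hm₁t
        · rw [List.cons_append] at hm₂
          injection hm₂ with hg1 hm₃
          subst hg1
          rcases m with _ | ⟨g2, m⟩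
          · simp only [List.nil_append] at hm₃
            subst hm₃
            cases h2 <;> simp at hm₁t
            · subst hm₁t
              have k1 := ih' [c, delInv] [d, a] t₂ _ Rule.r3 (by
                have := μ_ctx_lt x₁ [c, delInv, d, a] [d, delInv, c, a] t₂ (by decide) (by decide)
                simpa [List.append_assoc] using this)
              have k2 := ih' [c] [delInv, del] t₂ _ Rule.r6 (by
                have := μ_ctx_lt x₁ [c, delInv, del] [d, delInv, c, a] t₂ (by decide) (by decide)
                simpa [List.append_assoc] using this)
              have k3 := ih' ([] : W) [d, delInv, a] (c :: t₂) _ Rule.r9 (by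
                have := μ_ctx_lt x₁ [d, delInv, a, c] [d, delInv, c, a] t₂ (by decide) (by decide)
                simpa [List.append_assoc] using this)
              simp only [S, List.map_cons, List.map_nil, List.sum_cons, List.sum_nil,
                List.cons_append, List.nil_append, List.append_assoc, one_smul, neg_smul,
                add_zero] at k1 k2 k3 ⊢
              try rw [k1]
              try rw [k2]
              try rw [k3]
              try abel
            · subst hm₁t
              have k1 := ih' [c, delInv] [d, b] t₂ _ Rule.r4 (by
                have := μ_ctx_lt x₁ [c, delInv, d, b] [d, delInv, c, b] t₂ (by decide) (by decide)
                simpa [List.append_assoc] using this)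
              have k2 := ih' ([] : W) [d, delInv, a] (d :: t₂) _ Rule.r9 (by
                have := μ_ctx_lt x₁ [d, delInv, a, d] [d, delInv, c, b] t₂ (by decide) (by decide)
                simpa [List.append_assoc] using this)
              have k3 := ih' [d] [delInv, del] t₂ _ Rule.r6 (by
                have := μ_ctx_lt x₁ [d, delInv, del] [d, delInv, c, b] t₂ (by decide) (by decide)
                simpa [List.append_assoc] using this)
              simp only [S, List.map_cons, List.map_nil, List.sum_cons, List.sum_nil,
                List.cons_append, List.nil_append, List.append_assoc, one_smul, neg_smul,
                add_zero] at k1 k2 k3 ⊢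
              try rw [k1]
              try rw [k2]
              try rw [k3]
              try abel
          · rw [List.cons_append] at hm₃
            injection hm₃ with hg2 hm₄
            have hnil : m₁ = [] := (List.append_eq_nil_iff.mp hm₄).2
            rw [hnil] at hm₁len
            simp at hm₁len
  · -- disjoint rewrites
    have hp₁m : p₁ <+: m :=
      List.prefix_of_prefix_length_le ⟨t₁, rfl⟩ ⟨p₂ ++ t₂, hpt.symm⟩ hge
    obtain ⟨m₀, rfl⟩ := hp₁m
    have ht₁ : t₁ = m₀ ++ (p₂ ++ t₂) := by
      rw [List.append_assoc] at hpt
      exact List.append_cancel_left hpt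
    subst ht₁ hx₂
    have L : (S x₁ r₁ (m₀ ++ (p₂ ++ t₂)) : V k) =
        (r₁.map fun q₁ => (r₂.map fun q₂ =>
          (q₁.1 : ℤ) • (q₂.1 : ℤ) • nf k (x₁ ++ (q₁.2 ++ (m₀ ++ (q₂.2 ++ t₂))))).sum).sum := by
      unfold S
      congr 1
      apply List.map_congr_left
      intro q₁ hq₁
      have hμ : μ (x₁ ++ (q₁.2 ++ (m₀ ++ (p₂ ++ t₂)))) < μ (x₁ ++ p₁ ++ (m₀ ++ (p₂ ++ t₂))) := by
        have := μ_ctx_lt x₁ q₁.2 p₁ (m₀ ++ (p₂ ++ t₂)) (h1.decr q₁ hq₁).2 (h1.decr q₁ hq₁).1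
        simpa [List.append_assoc] using this
      have key := ih' (q₁.2 ++ m₀) p₂ t₂ r₂ h2 (by simpa [List.append_assoc] using hμ)
      simp only [List.append_assoc] at key ⊢
      rw [key, smul_sum', List.map_map]
      simp only [Function.comp_def]

    have R : (S (x₁ ++ (p₁ ++ m₀)) r₂ t₂ : V k) =
        (r₂.map fun q₂ => (r₁.map fun q₁ =>
          (q₁.1 : ℤ) • (q₂.1 : ℤ) • nf k (x₁ ++ (q₁.2 ++ (m₀ ++ (q₂.2 ++ t₂))))).sum).sum := by
      unfold S
      congr 1
      apply List.map_congr_left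
      intro q₂ hq₂
      have hμ : μ (x₁ ++ (p₁ ++ (m₀ ++ (q₂.2 ++ t₂)))) < μ (x₁ ++ p₁ ++ (m₀ ++ (p₂ ++ t₂))) := by
        have := μ_ctx_lt (x₁ ++ p₁ ++ m₀) q₂.2 p₂ t₂ (h2.decr q₂ hq₂).2 (h2.decr q₂ hq₂).1
        simpa [List.append_assoc] using this
      have key := hIH (x₁ ++ (p₁ ++ (m₀ ++ (q₂.2 ++ t₂)))) x₁ p₁ (m₀ ++ (q₂.2 ++ t₂)) r₁
        (by simpa [List.append_assoc] using hμ) h1 (by simp [List.append_assoc])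
      unfold S at key
      simp only [List.append_assoc] at key ⊢
      rw [key, smul_sum', List.map_map]
      simp only [Function.comp_def]
      congr 1
      apply List.map_congr_left
      intro q₁ _
      rw [smul_comm]
    rw [L, R, sum_swap]
lemma nf_eq_S_of_rw1 {w : W} {l} (h : rw1 w = some l)
    {x p t r} (hr : Rule p r) (hxpt : w = x ++ p ++ t)
    (hspec : l = r.map fun q => (q.1, x ++ q.2 ++ t)) :
    nf k w = S x r t := by
  rw [nf_of_some h, hspec, List.map_map]
  rfl

/-- **Invariance**: rewriting anywhere in a word does not change its normal form. -/
theorem inv_aux : ∀ (N : ℕ) (w x p t : W) (r : List (ℤ × W)), μ w ≤ N → Rule p r →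
    w = x ++ p ++ t → nf k w = S x r t := by
  intro N
  induction N with
  | zero =>
    intro w x p t r hN hr hw
    exfalso
    have : w ≠ [] := by
      intro h
      rw [h] at hw
      have := hw.symm
      rcases List.append_eq_nil_iff.mp this with ⟨h1, -⟩
      exact hr.ne_nil (List.append_eq_nil_iff.mp h1).2
    have := μ_pos w this
    omega
  | succ N ih =>
    intro w x p t r hN hr hw
    -- rw1 w is some
    rcases hrw : rw1 w with _ | l
    · exfalso
      have := (rw1_eq_none_iff w).mp hrw x (p ++ t) (by simp [hw, List.append_assoc])
      rw [hr.step_eq] at this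
      simp at this
    obtain ⟨x₀, p₀, t₀, r₀, hr₀, hw₀, hl₀⟩ := rw1_spec hrw
    have h0 : nf k w = S x₀ r₀ t₀ := nf_eq_S_of_rw1 hrw hr₀ hw₀ hl₀
    have hIH : ∀ v x' p' t' r', μ v < μ w → Rule p' r' → v = x' ++ p' ++ t' →
        nf k v = S x' r' t' := by
      intro v x' p' t' r' hv hr' hveq
      exact ih v x' p' t' r' (by omega) hr' hveq
    rcases le_total x₀.length x.length with hle | hle
    · rw [h0]
      exact diamond hr₀ hr (by rw [← hw₀, ← hw]) hle (by rw [← hw₀]; exact hIH)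
    · rw [h0]
      exact (diamond hr hr₀ (by rw [← hw₀, ← hw]) hle (by rw [← hw]; exact hIH)).symm

theorem inv {w x p t : W} {r : List (ℤ × W)} (hr : Rule p r) (hw : w = x ++ p ++ t) :
    nf k w = S x r t :=
  inv_aux (μ w) w x p t r le_rfl hr hw

/-- Front rewriting under `nf`. -/
lemma nf_rule {p r} (hr : Rule p r) (t : W) :
    nf k (p ++ t) = (r.map fun q => (q.1 : ℤ) • nf k (q.2 ++ t)).sum := by
  have := inv (k := k) hr (w := p ++ t) (x := []) (t := t) (by simp)
  rw [this]
  unfold S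
  simp
/-- Convenient front-rewriting lemmas. -/
lemma nf_r1 (t : W) : nf k (c :: a :: t) = nf k (a :: c :: t) := by
  simpa using nf_rule (k := k) Rule.r1 t
lemma nf_r2 (t : W) : nf k (c :: b :: t) = nf k (a :: d :: t) - nf k (del :: t) := by
  have := nf_rule (k := k) Rule.r2 t
  simpa [sub_eq_add_neg] using this
lemma nf_r3 (t : W) : nf k (d :: a :: t) = nf k (del :: t) + nf k (b :: c :: t) := by
  simpa using nf_rule (k := k) Rule.r3 t
lemma nf_r4 (t : W) : nf k (d :: b :: t) = nf k (b :: d :: t) := by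
  simpa using nf_rule (k := k) Rule.r4 t
lemma nf_r5 (t : W) : nf k (del :: delInv :: t) = nf k t := by
  simpa using nf_rule (k := k) Rule.r5 t
lemma nf_r6 (t : W) : nf k (delInv :: del :: t) = nf k t := by
  simpa using nf_rule (k := k) Rule.r6 t
lemma nf_r7 (t : W) : nf k (b :: delInv :: a :: t) = nf k (a :: delInv :: b :: t) := by
  simpa using nf_rule (k := k) Rule.r7 t
lemma nf_r8 (t : W) : nf k (b :: delInv :: c :: t) = nf k (a :: delInv :: d :: t) - nf k t := by
  simpa [sub_eq_add_neg] using nf_rule (k := k) Rule.r8 t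
lemma nf_r9 (t : W) : nf k (d :: delInv :: a :: t) = nf k (c :: delInv :: b :: t) + nf k t := by
  simpa using nf_rule (k := k) Rule.r9 t
lemma nf_r10 (t : W) : nf k (d :: delInv :: c :: t) = nf k (c :: delInv :: d :: t) := by
  simpa using nf_rule (k := k) Rule.r10 t

variable (k)

/-- Left multiplication by a generator, on the free module of normal words. -/
noncomputable def Lbar (g : GL2Gen) : V k →ₗ[k] V k :=
  Finsupp.lift (V k) k {l : W // normalWord l} fun l => nf k (g :: l.1)

variable {k}

lemma Lbar_single (g : GL2Gen) (l : {l : W // normalWord l}) (b : k) :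
    Lbar k g (Finsupp.single l b) = b • nf k (g :: l.1) := by
  simp [Lbar]

/-- `Lbar` intertwines with consing on normal forms. -/
theorem nf_cons_aux : ∀ (N : ℕ) (g : GL2Gen) (w : W), μ w ≤ N →
    Lbar k g (nf k w) = nf k (g :: w) := by
  intro N
  induction N with
  | zero =>
    intro g w hN
    rcases hrw : rw1 w with _ | l
    · rw [nf_of_none hrw, Lbar_single, one_smul]
    · exfalso
      obtain ⟨x, p, t, r, hr, hw, -⟩ := rw1_spec hrw
      have : w ≠ [] := by
        intro h; rw [h] at hw
        rcases List.append_eq_nil_iff.mp hw.symm with ⟨h1, -⟩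
        exact hr.ne_nil (List.append_eq_nil_iff.mp h1).2
      have := μ_pos w this
      omega
  | succ N ih =>
    intro g w hN
    rcases hrw : rw1 w with _ | l
    · rw [nf_of_none hrw, Lbar_single, one_smul]
    · obtain ⟨x, p, t, r, hr, hw, hl⟩ := rw1_spec hrw
      have h0 : nf k w = S x r t := nf_eq_S_of_rw1 hrw hr hw hl
      have h1 : nf k (g :: w) = S (g :: x) r t := inv hr (by rw [hw]; rfl)
      rw [h0, h1]
      unfold S
      rw [map_list_sum, List.map_map]
      congr 1
      apply List.map_congr_left
      intro q hq
      simp only [Function.comp_def]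
      rw [map_zsmul]
      have hμ : μ (x ++ q.2 ++ t) < μ w := by
        rw [hw]
        have := μ_ctx_lt x q.2 p t (hr.decr q hq).2 (hr.decr q hq).1
        simpa [List.append_assoc] using this
      rw [ih g (x ++ q.2 ++ t) (by omega)]
      congr 1
      try simp

theorem nf_cons (g : GL2Gen) (w : W) : Lbar k g (nf k w) = nf k (g :: w) :=
  nf_cons_aux (μ w) g w le_rfl

variable (k)

/-- The representation of the free algebra on the normal-word module. -/
noncomputable def ρ₀ : FGL2 k →ₐ[k] Module.End k (V k) :=
  FreeAlgebra.lift k fun g => Lbar k g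

variable {k}

lemma ρ₀_rel : ∀ ⦃x y : FGL2 k⦄, GL2Rel.rel k x y → ρ₀ k x = ρ₀ k y := by
  intro x y h
  have hgen : ∀ g : GL2Gen, ρ₀ k (FreeAlgebra.ι k g) = Lbar k g := fun g =>
    FreeAlgebra.lift_ι_apply _ _
  cases h <;>
    (refine Finsupp.lhom_ext fun l b => ?_ <;>
     simp only [map_mul, map_sub, map_one, map_zero, hgen, Module.End.mul_apply,
       LinearMap.sub_apply, Module.End.one_apply, LinearMap.zero_apply, Lbar_single,
       map_smul, nf_cons])
  case ac_comm => rw [nf_r1]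
  case bd_comm => rw [nf_r4]
  case det1 => rw [nf_r2]; simp [smul_sub]
  case det2 => rw [nf_r3]; simp [smul_add]
  case delInv1 =>
    rw [nf_r5, nf_normal l.2]
    simp [Finsupp.smul_single]
  case delInv2 =>
    rw [nf_r6, nf_normal l.2]
    simp [Finsupp.smul_single]
  case anti1 =>
    rw [nf_r8, nf_normal l.2]
    simp [smul_sub, Finsupp.smul_single]
  case anti2 =>
    rw [nf_r9, nf_normal l.2]
    simp [smul_add, Finsupp.smul_single]
  case anti3 => rw [nf_r7]; simp
  case anti4 => rw [nf_r10]; simp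
variable (k)

/-- The representation of `O_nc(GL₂)` on the free module of normal words. -/
noncomputable def ρ : OncGL2 k →ₐ[k] Module.End k (V k) :=
  RingQuot.liftAlgHom k ⟨ρ₀ k, ρ₀_rel⟩

variable {k}

lemma ρ_gen (g : GL2Gen) : ρ k (gl2gen k g) = Lbar k g := by
  rw [gl2gen, ρ, RingQuot.liftAlgHom_mkAlgHom_apply]
  exact FreeAlgebra.lift_ι_apply _ _

lemma normal_nil : normalWord ([] : W) := by
  intro p hp hinf
  have hp0 : p = [] := List.eq_nil_of_sublist_nil hinf.sublist
  subst hp0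
  simp [forbiddenWords] at hp

noncomputable def v₀ : V k := Finsupp.single ⟨[], normal_nil⟩ 1

lemma eval_prod (l : W) : ρ k ((l.map (gl2gen k)).prod) (v₀ : V k) = nf k l := by
  induction l with
  | nil =>
    simp only [List.map_nil, List.prod_nil, map_one, Module.End.one_apply]
    rw [nf_normal normal_nil]
    rfl
  | cons g t ih =>
    rw [List.map_cons, List.prod_cons, map_mul, Module.End.mul_apply, ih, ρ_gen, nf_cons]

/-- The `k`-linear "evaluation at the empty word" map. -/
noncomputable def T : OncGL2 k →ₗ[k] V k where
  toFun y := ρ k y v₀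
  map_add' u v := by simp [map_add]
  map_smul' r u := by simp [map_smul]

lemma linearIndependent_part :
    LinearIndependent k
      (fun l : {l : List GL2Gen // normalWord l} => ((l : List GL2Gen).map (gl2gen k)).prod) := by
  apply LinearIndependent.of_comp (T (k := k))
  have hTF : (⇑(T (k := k)) ∘ (fun l : {l : List GL2Gen // normalWord l} =>
      ((l : List GL2Gen).map (gl2gen k)).prod)) = fun l => Finsupp.single l 1 := by
    funext l
    show ρ k ((l.1.map (gl2gen k)).prod) v₀ = _
    rw [eval_prod, nf_normal l.2]
  rw [hTF]
  simpa [Finsupp.coe_basisSingleOne] using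
    (Finsupp.basisSingleOne (R := k) (ι := {l : List GL2Gen // normalWord l})).linearIndependent

/-- Multiplying a list-sum by a fixed element on the left. -/
lemma mul_sum' {A : Type*} [NonUnitalNonAssocRing A] (a : A) (l : List A) :
    a * l.sum = (l.map (a * ·)).sum := by
  induction l with
  | nil => simp
  | cons x l ih => simp [mul_add, ih]

/-- The rewrite rules hold in the quotient algebra. -/
lemma prod_rule {p r} (hr : Rule p r) (t : W) :
    (((p ++ t).map (gl2gen k)).prod : OncGL2 k) =
      (r.map fun q => (q.1 : ℤ) • ((q.2 ++ t).map (gl2gen k)).prod).sum := by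
  have hrel : ∀ {x y : FGL2 k}, GL2Rel.rel k x y →
      RingQuot.mkAlgHom k (GL2Rel.rel k) x = RingQuot.mkAlgHom k (GL2Rel.rel k) y :=
    fun h => RingQuot.mkAlgHom_rel k h
  cases hr <;>
    simp only [List.cons_append, List.nil_append, List.map_cons, List.prod_cons, List.map_nil,
      List.sum_cons, List.sum_nil, one_smul, neg_smul, add_zero, gl2gen] <;>
    [ (have h := congrArg (· * (List.map (gl2gen k) t).prod) (hrel GL2Rel.rel.ac_comm));
      (have h := congrArg (· * (List.map (gl2gen k) t).prod) (hrel GL2Rel.rel.det1));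
      (have h := congrArg (· * (List.map (gl2gen k) t).prod) (hrel GL2Rel.rel.det2));
      (have h := congrArg (· * (List.map (gl2gen k) t).prod) (hrel GL2Rel.rel.bd_comm));
      (have h := congrArg (· * (List.map (gl2gen k) t).prod) (hrel GL2Rel.rel.delInv1));
      (have h := congrArg (· * (List.map (gl2gen k) t).prod) (hrel GL2Rel.rel.delInv2));
      (have h := congrArg (· * (List.map (gl2gen k) t).prod) (hrel GL2Rel.rel.anti3));
      (have h := congrArg (· * (List.map (gl2gen k) t).prod) (hrel GL2Rel.rel.anti1));
      (have h := congrArg (· * (List.map (gl2gen k) t).prod) (hrel GL2Rel.rel.anti2));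
      (have h := congrArg (· * (List.map (gl2gen k) t).prod) (hrel GL2Rel.rel.anti4))] <;>
    simp only [map_mul, map_sub, map_one, map_zero, sub_mul, one_mul, zero_mul,
      mul_assoc] at h
  case r1 => exact h.symm
  case r2 => rw [← h]; abel
  case r3 => rw [← h]; abel
  case r4 => exact h.symm
  case r5 => exact h
  case r6 => exact h
  case r7 => exact sub_eq_zero.mp h
  case r8 => rw [sub_eq_iff_eq_add.mp h]; abel
  case r9 => exact (sub_eq_iff_eq_add.mp h).trans (add_comm _ _)
  case r10 => exact (sub_eq_zero.mp h).symm

/-- Every word-product lies in the span of normal-word products. -/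
lemma prod_mem_span : ∀ (N : ℕ) (w : W), μ w ≤ N →
    ((w.map (gl2gen k)).prod : OncGL2 k) ∈
      Submodule.span k (Set.range (fun l : {l : List GL2Gen // normalWord l} =>
        ((l : List GL2Gen).map (gl2gen k)).prod)) := by
  intro N
  induction N with
  | zero =>
    intro w hN
    rcases hrw : rw1 w with _ | l
    · exact Submodule.subset_span ⟨⟨w, rw1_normal hrw⟩, rfl⟩
    · exfalso
      obtain ⟨x, p, t, r, hr, hw, -⟩ := rw1_spec hrw
      have : w ≠ [] := by
        intro h; rw [h] at hw
        rcases List.append_eq_nil_iff.mp hw.symm with ⟨h1, -⟩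
        exact hr.ne_nil (List.append_eq_nil_iff.mp h1).2
      have := μ_pos w this
      omega
  | succ N ih =>
    intro w hN
    rcases hrw : rw1 w with _ | l
    · exact Submodule.subset_span ⟨⟨w, rw1_normal hrw⟩, rfl⟩
    · obtain ⟨x, p, t, r, hr, hw, -⟩ := rw1_spec hrw
      have key : ((w.map (gl2gen k)).prod : OncGL2 k) =
          (r.map fun q => (q.1 : ℤ) • ((x ++ q.2 ++ t).map (gl2gen k)).prod).sum := by
        rw [hw]
        rw [List.append_assoc, List.map_append, List.prod_append]
        rw [prod_rule hr t, mul_sum', List.map_map]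
        congr 1
        apply List.map_congr_left
        intro q _
        simp only [Function.comp_def]
        rw [mul_smul_comm]
        congr 1
        simp [List.map_append, List.prod_append, mul_assoc]
      rw [key]
      apply list_sum_mem
      intro y hy
      simp only [List.mem_map] at hy
      obtain ⟨q, hq, rfl⟩ := hy
      apply zsmul_mem
      apply ih
      have hμ : μ (x ++ q.2 ++ t) < μ w := by
        rw [hw]
        have := μ_ctx_lt x q.2 p t (hr.decr q hq).2 (hr.decr q hq).1
        simpa [List.append_assoc] using this
      omega

lemma span_part :
    Submodule.span k
      (Set.range (fun l : {l : List GL2Gen // normalWord l} =>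
        ((l : List GL2Gen).map (gl2gen k)).prod)) = ⊤ := by
  set Sp := Submodule.span k
      (Set.range (fun l : {l : List GL2Gen // normalWord l} =>
        ((l : List GL2Gen).map (gl2gen k)).prod)) with hSp
  have hword : ∀ w : W, ((w.map (gl2gen k)).prod : OncGL2 k) ∈ Sp :=
    fun w => prod_mem_span (μ w) w le_rfl
  have hmul : ∀ u ∈ Sp, ∀ v ∈ Sp, u * v ∈ Sp := by
    intro u hu
    induction hu using Submodule.span_induction with
    | mem u hu =>
      intro v hv
      induction hv using Submodule.span_induction with
      | mem v hv =>
        obtain ⟨l₁, rfl⟩ := hu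
        obtain ⟨l₂, rfl⟩ := hv
        have : ((l₁ : List GL2Gen).map (gl2gen k)).prod * ((l₂ : List GL2Gen).map (gl2gen k)).prod
            = (((l₁ : List GL2Gen) ++ (l₂ : List GL2Gen)).map (gl2gen k)).prod := by
          rw [List.map_append, List.prod_append]
        rw [this]
        exact hword _
      | zero => simp
      | add v w hv hw ihv ihw => rw [mul_add]; exact Submodule.add_mem _ ihv ihw
      | smul a v hv ihv => rw [mul_smul_comm]; exact Submodule.smul_mem _ _ ihv
    | zero => intro v hv; simp
    | add u w hu hw ihu ihw => intro v hv; rw [add_mul]; exact Submodule.add_mem _ (ihu v hv) (ihw v hv)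
    | smul a u hu ihu => intro v hv; rw [smul_mul_assoc]; exact Submodule.smul_mem _ _ (ihu v hv)
  rw [eq_top_iff]
  rintro y -
  obtain ⟨z, rfl⟩ := RingQuot.mkAlgHom_surjective k (GL2Rel.rel k) y
  induction z using FreeAlgebra.induction with
  | grade0 r =>
    rw [AlgHom.commutes]
    have h1 : (1 : OncGL2 k) ∈ Sp := by simpa using hword []
    simpa [Algebra.algebraMap_eq_smul_one] using Submodule.smul_mem _ r h1
  | grade1 g =>
    simpa [gl2gen] using hword [g]
  | mul a b ha hb =>
    rw [map_mul]
    exact hmul _ ha _ hb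
  | add a b ha hb =>
    rw [map_add]
    exact Submodule.add_mem _ ha hb

end GL2NF

/-- The normal-form monomials form a `k`-vector space basis of
`O_nc(GL₂)`: they are linearly independent and span. -/
theorem basis_of_OncGL2 (k : Type) [Field k] :
    LinearIndependent k
      (fun l : {l : List GL2Gen // normalWord l} => ((l : List GL2Gen).map (gl2gen k)).prod) ∧
    Submodule.span k
      (Set.range (fun l : {l : List GL2Gen // normalWord l} =>
        ((l : List GL2Gen).map (gl2gen k)).prod)) = ⊤ := by
  exact ⟨GL2NF.linearIndependent_part, GL2NF.span_part⟩
end
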